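/- arXiv:1910.00670 — 3 statements merged into one kernel-verified Lean document; each statement's English description precedes it below -/
import Mathlib

section
/- Let T be a tubing of a finite connected simple graph Γ, let t ∈ T, let S be a tubing of (Γ_t)_{T|_t}^*, and let s be a proper tube of S. Let s̃ := s ∪ (the union of the maximal proper tubes of T|_t linked in Γ_t to s), which is a tube of the tubing γ_t(T;S). Then the graphs (((Γ_t)_{T|_t}^*)_s)_{S|_s}^* and (Γ_{s̃})_{γ_t(T;S)|_{s̃}}^* are equal: they have the same vertex set and the same edges. -/
open scoped Classical
open TensorProduct

noncomputable section

/-- A finite simple graph whose vertices are a finite set of (totally ordered) naturals. -/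
structure FinGraph : Type where
  verts : Finset ℕ
  Adj : ℕ → ℕ → Prop
  symm : ∀ v w, Adj v w → Adj w v
  loopless : ∀ v, ¬ Adj v v
  support : ∀ v w, Adj v w → v ∈ verts ∧ w ∈ verts

namespace CDTub

/-- Connectivity of a vertex set within a graph: any two of its vertices are joined by a
walk staying inside the set. -/
def VConn (G : FinGraph) (s : Finset ℕ) : Prop :=
  ∀ v ∈ s, ∀ w ∈ s, Relation.ReflTransGen (fun a b => a ∈ s ∧ b ∈ s ∧ G.Adj a b) v w

/-- A tube: a nonempty set of vertices inducing a connected subgraph. -/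
def IsTube (G : FinGraph) (t : Finset ℕ) : Prop :=
  t.Nonempty ∧ t ⊆ G.verts ∧ VConn G t

/-- A connected (nonempty) graph: the universal tube is a tube. -/
def IsConnGraph (G : FinGraph) : Prop := IsTube G G.verts

/-- Two vertex sets are far apart: disjoint and with no edge between them. -/
def FarApart (G : FinGraph) (a b : Finset ℕ) : Prop :=
  Disjoint a b ∧ ¬ ∃ v ∈ a, ∃ w ∈ b, G.Adj v w

/-- Compatible tubes: nested or far apart. -/
def Compatible (G : FinGraph) (a b : Finset ℕ) : Prop :=
  a ⊆ b ∨ b ⊆ a ∨ FarApart G a b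

/-- Linked tubes: disjoint and joined by an edge. -/
def Linked (G : FinGraph) (a b : Finset ℕ) : Prop :=
  Disjoint a b ∧ ∃ v ∈ a, ∃ w ∈ b, G.Adj v w

/-- A tubing of a connected graph: pairwise compatible tubes containing the universal tube. -/
def IsTubing (G : FinGraph) (T : Finset (Finset ℕ)) : Prop :=
  G.verts ∈ T ∧ (∀ t ∈ T, IsTube G t) ∧
    ∀ t ∈ T, ∀ t' ∈ T, t ≠ t' → Compatible G t t'

/-- Induced subgraph on a set of vertices. -/
def induce (G : FinGraph) (t : Finset ℕ) : FinGraph where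
  verts := t
  Adj v w := v ∈ t ∧ w ∈ t ∧ G.Adj v w
  symm := fun v w h => ⟨h.2.1, h.1, G.symm v w h.2.2⟩
  loopless := fun v h => G.loopless v h.2.2
  support := fun _ _ h => ⟨h.1, h.2.1⟩

/-- Simultaneous reconnected complement with respect to a family `F` of tubes
(for a single tube, or a family of pairwise far apart tubes, this is the (iterated)
reconnected complement). -/
def reconnAll (G : FinGraph) (F : Finset (Finset ℕ)) : FinGraph where
  verts := G.verts \ F.biUnion id
  Adj v w := v ≠ w ∧ v ∈ G.verts \ F.biUnion id ∧ w ∈ G.verts \ F.biUnion id ∧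
    (G.Adj v w ∨ ∃ f ∈ F, (∃ u ∈ f, G.Adj v u) ∧ ∃ u' ∈ f, G.Adj w u')
  symm := by
    rintro v w ⟨hne, hv, hw, h⟩
    refine ⟨hne.symm, hw, hv, ?_⟩
    rcases h with h | ⟨f, hf, h1, h2⟩
    · exact Or.inl (G.symm _ _ h)
    · exact Or.inr ⟨f, hf, h2, h1⟩
  loopless := fun v h => h.1 rfl
  support := fun _ _ h => ⟨h.2.1, h.2.2.1⟩

/-- Reconnected complement `Γ_t^*` of a graph with respect to a tube. -/
def reconn (G : FinGraph) (t : Finset ℕ) : FinGraph := reconnAll G {t}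

/-- The proper tubes of a tubing. -/
def properTubes (G : FinGraph) (T : Finset (Finset ℕ)) : Finset (Finset ℕ) :=
  T.filter (fun s => s ≠ G.verts)

/-- The maximal proper tubes of a tubing. -/
def MaxtP (G : FinGraph) (T : Finset (Finset ℕ)) : Finset (Finset ℕ) :=
  (properTubes G T).filter (fun s => ∀ s' ∈ properTubes G T, s ⊆ s' → s = s')

/-- The iterated reconnected complement `Γ_T^*` with respect to the maximal proper tubes. -/
def gammaStar (G : FinGraph) (T : Finset (Finset ℕ)) : FinGraph :=
  reconnAll G (MaxtP G T)

/-- Restriction `T|_t` of a tubing to a tube. -/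
def restrictT (T : Finset (Finset ℕ)) (t : Finset ℕ) : Finset (Finset ℕ) :=
  T.filter (fun s => s ⊆ t)

/-- For a tube `s` of `Γ_T^*`, the tube `s̃` of `Γ`: the union of `s` with all maximal
proper tubes of `T` linked to `s`. -/
def tildeT (G : FinGraph) (T : Finset (Finset ℕ)) (s : Finset ℕ) : Finset ℕ :=
  s ∪ ((MaxtP G T).filter (fun m => Linked G m s)).biUnion id

/-- Substitution `T •_Γ S` of a tubing `S` of `Γ_T^*` into the tubing `T`. -/
def substT (G : FinGraph) (T S : Finset (Finset ℕ)) : Finset (Finset ℕ) :=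
  T ∪ S.image (tildeT G T)

/-- The `t`-substitution `γ_t(T;S) = T ∪ (T|_t •_{Γ_t} S)`. -/
def gammaSub (G : FinGraph) (T : Finset (Finset ℕ)) (t : Finset ℕ)
    (S : Finset (Finset ℕ)) : Finset (Finset ℕ) :=
  T ∪ substT (induce G t) (restrictT T t) S

/-- The tubing `T_t^*` induced on the reconnected complement `Γ_t^*`. -/
def indStar (T : Finset (Finset ℕ)) (t : Finset ℕ) : Finset (Finset ℕ) :=
  T.filter (fun s => Disjoint s t) ∪ (T.filter (fun s => t ⊂ s)).image (fun s => s \ t)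

/-- The operation `T ◇ S` of Definition 2.4(2). -/
def diamond (G : FinGraph) (T : Finset (Finset ℕ)) (t : Finset ℕ)
    (S : Finset (Finset ℕ)) : Finset (Finset ℕ) :=
  T ∪ S.filter (fun s => ¬ Linked G s t) ∪
    (S.filter (fun s => Linked G s t)).image (fun s => s ∪ t)

/-- The tubes of `T`, viewed as subsets of the subtype of vertices. -/
def tubeSets (G : FinGraph) (T : Finset (Finset ℕ)) : Set (Set {x // x ∈ G.verts}) :=
  {U | ∃ t ∈ T, U = {x : {x // x ∈ G.verts} | (x : ℕ) ∈ t}}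

/-- The topology on the vertex set generated by the tubes of `T`. -/
def tubingTop (G : FinGraph) (T : Finset (Finset ℕ)) :
    TopologicalSpace {x // x ∈ G.verts} :=
  TopologicalSpace.generateFrom (tubeSets G T)

/-- One-line notation of the permutation `σ_t`: the vertices of `t` in increasing order
followed by the remaining vertices in increasing order. -/
def sigmaList (X t : Finset ℕ) : List ℕ :=
  t.sort (· ≤ ·) ++ (X \ t).sort (· ≤ ·)

/-- Number of `Γ`-inversions of a permutation given by its one-line notation `l`:
pairs of positions `p < q` carrying values `a > b` which form an edge of `Γ`. -/
def invCount (G : FinGraph) (l : List ℕ) : ℕ :=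
  ((Finset.range l.length ×ˢ Finset.range l.length).filter
    (fun pq => pq.1 < pq.2 ∧ l.getD pq.2 0 < l.getD pq.1 0 ∧
      G.Adj (l.getD pq.1 0) (l.getD pq.2 0))).card

/-- The signature `sgn^Γ(σ) = (-1)^{inv_Γ(σ)}`. -/
def graphSgn (G : FinGraph) (l : List ℕ) : ℤ := (-1) ^ invCount G l

/-- Rank (1-based) of `v` inside a finite set `X` of naturals: the order-preserving
relabelling of `X` by `{1,…,|X|}`. -/
def rk (X : Finset ℕ) (v : ℕ) : ℕ := (X.filter (fun u => u ≤ v)).card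

/-- Order-preserving relabelling of a graph by the initial segment `{1,…,n}`. -/
def relabelG (G : FinGraph) : FinGraph where
  verts := G.verts.image (rk G.verts)
  Adj i j := i ≠ j ∧ ∃ v w, G.Adj v w ∧ i = rk G.verts v ∧ j = rk G.verts w
  symm := by
    rintro i j ⟨hne, v, w, h, hi, hj⟩
    exact ⟨hne.symm, w, v, G.symm _ _ h, hj, hi⟩
  loopless := fun _ h => h.1 rfl
  support := by
    rintro i j ⟨hne, v, w, h, hi, hj⟩
    exact ⟨Finset.mem_image.mpr ⟨v, (G.support _ _ h).1, hi.symm⟩,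
      Finset.mem_image.mpr ⟨w, (G.support _ _ h).2, hj.symm⟩⟩

/-- Order-preserving relabelling of a subset of `X`. -/
def relabelF (X t : Finset ℕ) : Finset ℕ := t.image (rk X)

/-- Order-preserving relabelling of a family of subsets of `X`. -/
def relabelT (X : Finset ℕ) (T : Finset (Finset ℕ)) : Finset (Finset ℕ) :=
  T.image (relabelF X)

/-- Connected components (in `G`) of a set of vertices. -/
def comps (G : FinGraph) (s : Finset ℕ) : Finset (Finset ℕ) :=
  s.image (fun v => s.filter (fun w =>
    Relation.ReflTransGen (fun a b => a ∈ s ∧ b ∈ s ∧ G.Adj a b) v w))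

/-- The restriction map `res_Ω^Γ` on tubings: replace each tube by its connected
components in `Ω`. -/
def resT (Om : FinGraph) (T : Finset (Finset ℕ)) : Finset (Finset ℕ) :=
  T.biUnion (comps Om)

/-- Shift of a vertex set by `n`. -/
def shiftF (n : ℕ) (s : Finset ℕ) : Finset ℕ := s.image (fun v => v + n)

/-- Shift of a family of vertex sets by `n`. -/
def shiftT (n : ℕ) (S : Finset (Finset ℕ)) : Finset (Finset ℕ) := S.image (shiftF n)

/-- Shift of a graph by `n`. -/
def shiftG (n : ℕ) (G : FinGraph) : FinGraph where
  verts := shiftF n G.verts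
  Adj v w := ∃ a b, G.Adj a b ∧ v = a + n ∧ w = b + n
  symm := by
    rintro v w ⟨a, b, h, rfl, rfl⟩
    exact ⟨b, a, G.symm _ _ h, rfl, rfl⟩
  loopless := by
    rintro v ⟨a, b, h, ha, hb⟩
    have : a = b := by omega
    exact G.loopless b (this ▸ h)
  support := by
    rintro v w ⟨a, b, h, rfl, rfl⟩
    exact ⟨Finset.mem_image.mpr ⟨a, (G.support _ _ h).1, rfl⟩,
      Finset.mem_image.mpr ⟨b, (G.support _ _ h).2, rfl⟩⟩

/-- `X_T` : the vertices belonging to no proper tube of `T`. -/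
def freeVerts (G : FinGraph) (T : Finset (Finset ℕ)) : Finset ℕ :=
  G.verts.filter (fun v => ∀ s ∈ T, s ≠ G.verts → v ∉ s)

/-- The endpoint `max X_T` of the joining edge. -/
def joinA (G : FinGraph) (T : Finset (Finset ℕ)) : ℕ :=
  WithBot.unbotD 0 (freeVerts G T).max

/-- The endpoint `n + min X_S` of the joining edge. -/
def joinB (Om : FinGraph) (S : Finset (Finset ℕ)) (n : ℕ) : ℕ :=
  n + WithTop.untopD 0 (freeVerts Om S).min

/-- Vertex set of the joined graph `Γ ∪_{T,S} Ω`. -/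
def joinVerts (G Om : FinGraph) (n : ℕ) : Finset ℕ := G.verts ∪ shiftF n Om.verts

/-- The joined graph `Γ ∪_{T,S} Ω`: the disjoint union (with `Ω` shifted by `n`)
plus one edge from `max X_T` to `n + min X_S`. -/
def joinG (G Om : FinGraph) (T S : Finset (Finset ℕ)) (n : ℕ) : FinGraph where
  verts := joinVerts G Om n
  Adj v w := G.Adj v w ∨ (shiftG n Om).Adj v w ∨
    (v ≠ w ∧ v ∈ joinVerts G Om n ∧ w ∈ joinVerts G Om n ∧
      ((v = joinA G T ∧ w = joinB Om S n) ∨ (w = joinA G T ∧ v = joinB Om S n)))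
  symm := by
    rintro v w (h | h | ⟨hne, hv, hw, hc⟩)
    · exact Or.inl (G.symm _ _ h)
    · exact Or.inr (Or.inl ((shiftG n Om).symm _ _ h))
    · exact Or.inr (Or.inr ⟨hne.symm, hw, hv, hc.symm⟩)
  loopless := by
    rintro v (h | h | ⟨hne, _⟩)
    · exact G.loopless v h
    · exact (shiftG n Om).loopless v h
    · exact hne rfl
  support := by
    rintro v w (h | h | ⟨_, hv, hw, _⟩)
    · exact ⟨Finset.mem_union_left _ (G.support _ _ h).1,
        Finset.mem_union_left _ (G.support _ _ h).2⟩
    · exact ⟨Finset.mem_union_right _ ((shiftG n Om).support _ _ h).1,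
        Finset.mem_union_right _ ((shiftG n Om).support _ _ h).2⟩
    · exact ⟨hv, hw⟩

/-- `T ▷ S`. -/
def trR (G Om : FinGraph) (T S : Finset (Finset ℕ)) (n : ℕ) : Finset (Finset ℕ) :=
  T ∪ shiftT n (properTubes Om S) ∪ {joinVerts G Om n}

/-- `T ◁ S`. -/
def trL (G Om : FinGraph) (T S : Finset (Finset ℕ)) (n : ℕ) : Finset (Finset ℕ) :=
  properTubes G T ∪ shiftT n S ∪ {joinVerts G Om n}

/-- `T ⊥ S`. -/
def tPerp (G Om : FinGraph) (T S : Finset (Finset ℕ)) (n : ℕ) : Finset (Finset ℕ) :=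
  properTubes G T ∪ shiftT n (properTubes Om S) ∪ {joinVerts G Om n}

/-- Equality of graphs: same vertex set and same edges. -/
def GEq (A B : FinGraph) : Prop :=
  A.verts = B.verts ∧ ∀ v w, A.Adj v w ↔ B.Adj v w

/-- Index type for the basis of `Tub⁺`: `none` is the unit `1`, `some (Γ,T)` is a pair. -/
abbrev TubIdx : Type := Option (FinGraph × Finset (Finset ℕ))

/-- A pair `(Γ,T)` relabelled order-preservingly to standard vertex set, identified
with the unit `1` when the vertex set is empty. -/
def embPair (G : FinGraph) (T : Finset (Finset ℕ)) : TubIdx :=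
  if G.verts = ∅ then none else some (relabelG G, relabelT G.verts T)

/-- The value of the pre-Lie coproduct `Δ_•` on a basis element. -/
def deltaFun (K : Type) [CommRing K] (i : TubIdx) :
    (TubIdx →₀ K) ⊗[K] (TubIdx →₀ K) :=
  match i with
  | none => Finsupp.single (none : TubIdx) (1 : K) ⊗ₜ[K] Finsupp.single (none : TubIdx) (1 : K)
  | some (G, T) =>
      (∑ t ∈ T, (Finsupp.single (embPair (induce G t) (restrictT T t)) (1 : K)) ⊗ₜ[K]
        (Finsupp.single (embPair (reconn G t) (indStar T t)) (1 : K)))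
      + (Finsupp.single (none : TubIdx) (1 : K)) ⊗ₜ[K]
          (Finsupp.single (some (G, T) : TubIdx) (1 : K))

/-- The pre-Lie coproduct `Δ_•` on `Tub⁺`, the free module on `TubIdx`. -/
def delta (K : Type) [CommRing K] :
    (TubIdx →₀ K) →ₗ[K] (TubIdx →₀ K) ⊗[K] (TubIdx →₀ K) :=
  Finsupp.lift ((TubIdx →₀ K) ⊗[K] (TubIdx →₀ K)) K TubIdx (deltaFun K)

end CDTub


section AuxAssoc
open CDTub

private lemma auxA_exists_max (P : Finset (Finset ℕ)) {r : Finset ℕ} (hr : r ∈ P) :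
    ∃ m ∈ P, r ⊆ m ∧ ∀ r' ∈ P, m ⊆ r' → m = r' := by
  obtain ⟨m, hm, hmax⟩ := (P.filter (fun p => r ⊆ p)).exists_maximal
    ⟨r, Finset.mem_filter.mpr ⟨hr, subset_rfl⟩⟩
  rw [Finset.mem_filter] at hm
  refine ⟨m, hm.1, hm.2, fun r' hr' hmr' => ?_⟩
  by_contra hne
  exact hne (Finset.Subset.antisymm hmr' (hmax (Finset.mem_filter.mpr ⟨hr', hm.2.trans hmr'⟩) hmr'))

private lemma auxA_mem_MaxtP {H : FinGraph} {U : Finset (Finset ℕ)} {m : Finset ℕ} :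
    m ∈ MaxtP H U ↔ (m ∈ U ∧ m ≠ H.verts) ∧
      ∀ r ∈ U, r ≠ H.verts → m ⊆ r → m = r := by
  constructor
  · intro h
    rw [MaxtP, Finset.mem_filter] at h
    obtain ⟨h1, h2⟩ := h
    rw [properTubes, Finset.mem_filter] at h1
    exact ⟨h1, fun r hr hrne hmr =>
      h2 r (Finset.mem_filter.mpr ⟨hr, hrne⟩) hmr⟩
  · rintro ⟨h1, h2⟩
    rw [MaxtP, Finset.mem_filter]
    refine ⟨Finset.mem_filter.mpr h1, fun r hr hmr => ?_⟩
    rw [properTubes, Finset.mem_filter] at hr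
    exact h2 r hr.1 hr.2 hmr

private lemma auxA_mem_restrictT {T : Finset (Finset ℕ)} {t r : Finset ℕ} :
    r ∈ restrictT T t ↔ r ∈ T ∧ r ⊆ t := Finset.mem_filter

private lemma auxA_mem_tildeT {H : FinGraph} {U : Finset (Finset ℕ)} {s : Finset ℕ} {x : ℕ} :
    x ∈ tildeT H U s ↔ x ∈ s ∨ ∃ m ∈ MaxtP H U, Linked H m s ∧ x ∈ m := by
  rw [tildeT, Finset.mem_union]
  constructor
  · rintro (h | h)
    · exact Or.inl h
    · obtain ⟨m, hm, hx⟩ := Finset.mem_biUnion.mp h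
      rw [Finset.mem_filter] at hm
      exact Or.inr ⟨m, hm.1, hm.2, hx⟩
  · rintro (h | ⟨m, hm1, hm2, hx⟩)
    · exact Or.inl h
    · exact Or.inr (Finset.mem_biUnion.mpr ⟨m, Finset.mem_filter.mpr ⟨hm1, hm2⟩, hx⟩)

private lemma auxA_subset_tildeT (H : FinGraph) (U : Finset (Finset ℕ)) (s : Finset ℕ) :
    s ⊆ tildeT H U s := fun x hx => auxA_mem_tildeT.mpr (Or.inl hx)

private lemma auxA_maxt_subset_tildeT {H : FinGraph} {U : Finset (Finset ℕ)}
    {s m : Finset ℕ} (hm : m ∈ MaxtP H U) (hl : Linked H m s) :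
    m ⊆ tildeT H U s := fun x hx => auxA_mem_tildeT.mpr (Or.inr ⟨m, hm, hl, hx⟩)

private lemma auxA_mem_gammaSub {G : FinGraph} {T S : Finset (Finset ℕ)} {t r : Finset ℕ} :
    r ∈ gammaSub G T t S ↔ r ∈ T ∨
      ∃ s'' ∈ S, r = tildeT (induce G t) (restrictT T t) s'' := by
  rw [gammaSub, substT, Finset.mem_union, Finset.mem_union]
  constructor
  · rintro (h | h | h)
    · exact Or.inl h
    · exact Or.inl (Finset.mem_filter.mp h).1
    · obtain ⟨s'', hs'', hr⟩ := Finset.mem_image.mp h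
      exact Or.inr ⟨s'', hs'', hr.symm⟩
  · rintro (h | ⟨s'', hs'', hr⟩)
    · exact Or.inl h
    · exact Or.inr (Or.inr (Finset.mem_image.mpr ⟨s'', hs'', hr.symm⟩))

private lemma auxA_mem_properTubes {H : FinGraph} {U : Finset (Finset ℕ)} {r : Finset ℕ} :
    r ∈ properTubes H U ↔ r ∈ U ∧ r ≠ H.verts := Finset.mem_filter

private lemma auxA_linked_def {H : FinGraph} {a b : Finset ℕ} :
    Linked H a b ↔ Disjoint a b ∧ ∃ v ∈ a, ∃ w ∈ b, H.Adj v w := Iff.rfl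

end AuxAssoc

open CDTub in
/-- The graphs `(((Γ_t)_{T|_t}^*)_s)_{S|_s}^*` and `(Γ_{s̃})_{γ_t(T;S)|_{s̃}}^*` are
equal: same vertex set and same edges. -/
theorem assoc_graphs_eq (G : FinGraph) (hc : IsConnGraph G)
    (T : Finset (Finset ℕ)) (hT : IsTubing G T) (t : Finset ℕ) (ht : t ∈ T)
    (S : Finset (Finset ℕ))
    (hS : IsTubing (gammaStar (induce G t) (restrictT T t)) S)
    (s : Finset ℕ) (hs : s ∈ S)
    (hsp : s ≠ (gammaStar (induce G t) (restrictT T t)).verts) :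
    (gammaStar (induce (gammaStar (induce G t) (restrictT T t)) s) (restrictT S s)).verts =
      (gammaStar (induce G (tildeT (induce G t) (restrictT T t) s))
        (restrictT (gammaSub G T t S) (tildeT (induce G t) (restrictT T t) s))).verts ∧
    ∀ v w,
      (gammaStar (induce (gammaStar (induce G t) (restrictT T t)) s)
          (restrictT S s)).Adj v w ↔
      (gammaStar (induce G (tildeT (induce G t) (restrictT T t) s))
          (restrictT (gammaSub G T t S) (tildeT (induce G t) (restrictT T t) s))).Adj v w := by
  classical
  set Γt := induce G t with hΓtdef
  set Tt := restrictT T t with hTtdef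
  set G1 := gammaStar Γt Tt with hG1def
  set st := tildeT Γt Tt s with hstdef
  set M := MaxtP Γt Tt with hMdef
  set HR := induce G st with hHRdef
  set U' := restrictT (gammaSub G T t S) st with hU'def
  set MR := MaxtP HR U' with hMRdef
  set HL := induce G1 s with hHLdef
  set SL := restrictT S s with hSLdef
  set ML := MaxtP HL SL with hMLdef
  have hΓtv : Γt.verts = t := rfl
  have hG1v : G1.verts = t \ M.biUnion id := rfl
  have hHLv : HL.verts = s := rfl
  have hHRv : HR.verts = st := rfl
  have hΓtAdj : ∀ a b, Γt.Adj a b ↔ a ∈ t ∧ b ∈ t ∧ G.Adj a b := fun _ _ => Iff.rfl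
  have hG1Adj : ∀ a b, G1.Adj a b ↔ a ≠ b ∧ a ∈ G1.verts ∧ b ∈ G1.verts ∧
      (Γt.Adj a b ∨ ∃ m ∈ M, (∃ p ∈ m, Γt.Adj a p) ∧ ∃ q ∈ m, Γt.Adj b q) :=
    fun _ _ => Iff.rfl
  have hHLAdj : ∀ a b, HL.Adj a b ↔ a ∈ s ∧ b ∈ s ∧ G1.Adj a b := fun _ _ => Iff.rfl
  have hHRAdj : ∀ a b, HR.Adj a b ↔ a ∈ st ∧ b ∈ st ∧ G.Adj a b := fun _ _ => Iff.rfl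
  have hLAdj : ∀ v w, (gammaStar HL SL).Adj v w ↔ v ≠ w ∧
      v ∈ (gammaStar HL SL).verts ∧ w ∈ (gammaStar HL SL).verts ∧
      (HL.Adj v w ∨ ∃ f ∈ ML, (∃ u ∈ f, HL.Adj v u) ∧ ∃ u' ∈ f, HL.Adj w u') :=
    fun _ _ => Iff.rfl
  have hRAdj : ∀ v w, (gammaStar HR U').Adj v w ↔ v ≠ w ∧
      v ∈ (gammaStar HR U').verts ∧ w ∈ (gammaStar HR U').verts ∧
      (HR.Adj v w ∨ ∃ f ∈ MR, (∃ u ∈ f, HR.Adj v u) ∧ ∃ u' ∈ f, HR.Adj w u') :=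
    fun _ _ => Iff.rfl
  have hTtube : ∀ r ∈ T, IsTube G r := hT.2.1
  have hStube : ∀ r ∈ S, IsTube G1 r := hS.2.1
  have hsub : s ⊆ G1.verts := (hStube s hs).2.1
  have hsne : s.Nonempty := (hStube s hs).1
  have hG1t : G1.verts ⊆ t := by rw [hG1v]; exact Finset.sdiff_subset
  have hMmem : ∀ m, m ∈ M ↔ (m ∈ T ∧ m ⊆ t ∧ m ≠ t) ∧
      (∀ r ∈ T, r ⊆ t → r ≠ t → m ⊆ r → m = r) := by
    intro m
    rw [hMdef, auxA_mem_MaxtP, hΓtv, hTtdef]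
    simp only [auxA_mem_restrictT]
    constructor
    · rintro ⟨⟨⟨h1, h2⟩, h3⟩, h4⟩
      exact ⟨⟨h1, h2, h3⟩, fun r hr hrt hrne hmr => h4 r ⟨hr, hrt⟩ hrne hmr⟩
    · rintro ⟨⟨h1, h2, h3⟩, h4⟩
      exact ⟨⟨⟨h1, h2⟩, h3⟩, fun r hr hrne hmr => h4 r hr.1 hr.2 hrne hmr⟩
  have hMdisjG1 : ∀ m ∈ M, ∀ x ∈ m, x ∉ G1.verts := by
    intro m hm x hx hx'
    rw [hG1v, Finset.mem_sdiff] at hx'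
    exact hx'.2 (Finset.mem_biUnion.mpr ⟨m, hm, hx⟩)
  have hMsubt : ∀ m ∈ M, m ⊆ t := fun m hm => ((hMmem m).mp hm).1.2.1
  have hMeq : ∀ m ∈ M, ∀ m' ∈ M, ∀ x, x ∈ m → x ∈ m' → m = m' := by
    intro m hm m' hm' x hx hx'
    by_contra hne
    obtain ⟨⟨hmT, hmt, hmnt⟩, hmax⟩ := (hMmem m).mp hm
    obtain ⟨⟨hm'T, hm't, hm'nt⟩, hmax'⟩ := (hMmem m').mp hm'
    rcases hT.2.2 m hmT m' hm'T hne with h | h | h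
    · exact hne (hmax m' hm'T hm't hm'nt h)
    · exact hne ((hmax' m hmT hmt hmnt h).symm)
    · exact (Finset.disjoint_left.mp h.1 hx) hx'
  have hmemst : ∀ x, x ∈ st ↔ x ∈ s ∨ ∃ m ∈ M, Linked Γt m s ∧ x ∈ m := by
    intro x; rw [hstdef, auxA_mem_tildeT, ← hMdef]
  have hsst : s ⊆ st := fun x hx => (hmemst x).mpr (Or.inl hx)
  have hstt : st ⊆ t := by
    intro x hx
    rcases (hmemst x).mp hx with h | ⟨m, hm, _, hx'⟩
    · exact hG1t (hsub h)
    · exact hMsubt m hm hx'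
  have hstG1 : ∀ x ∈ st, x ∈ G1.verts → x ∈ s := by
    intro x hx hxv
    rcases (hmemst x).mp hx with h | ⟨m, hm, _, hx'⟩
    · exact h
    · exact absurd hxv (hMdisjG1 m hm x hx')
  have hstne : st ≠ t := by
    obtain ⟨x, hxv, hxs⟩ :=
      Finset.exists_of_ssubset (Finset.ssubset_iff_subset_ne.mpr ⟨hsub, hsp⟩)
    intro h
    have hxst : x ∈ st := by rw [h]; exact hG1t hxv
    exact hxs (hstG1 x hxst hxv)
  have hdisjM : ∀ m ∈ M, ∀ a : Finset ℕ, a ⊆ G1.verts → Disjoint m a := by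
    intro m hm a ha
    rw [Finset.disjoint_left]
    intro x hx hxa
    exact hMdisjG1 m hm x hx (ha hxa)
  have hlinked : ∀ m ∈ M, ∀ b : Finset ℕ, b ⊆ G1.verts →
      (∃ p ∈ m, ∃ q ∈ b, Γt.Adj p q) → Linked Γt m b := by
    intro m hm b hsubb hex
    exact auxA_linked_def.mpr ⟨hdisjM m hm b hsubb, hex⟩
  have htilde_mem : ∀ (b : Finset ℕ) (x : ℕ), x ∈ tildeT Γt Tt b ↔
      x ∈ b ∨ ∃ m ∈ M, Linked Γt m b ∧ x ∈ m := by
    intro b x; rw [auxA_mem_tildeT, ← hMdef]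
  have htilde_sub : ∀ b : Finset ℕ, b ⊆ s → tildeT Γt Tt b ⊆ st := by
    intro b hss x hx
    rcases (htilde_mem b x).mp hx with h | ⟨m, hm, hl, hx'⟩
    · exact hsst (hss h)
    · refine (hmemst x).mpr (Or.inr ⟨m, hm, ?_, hx'⟩)
      obtain ⟨p, hp, q, hq, hadj⟩ := (auxA_linked_def.mp hl).2
      exact hlinked m hm s hsub ⟨p, hp, q, hss hq, hadj⟩
  have htilde_sup : ∀ b ∈ S, tildeT Γt Tt b ⊆ st → b ⊆ s := by
    intro b hb hsubst x hx
    exact hstG1 x (hsubst (auxA_subset_tildeT Γt Tt b hx)) ((hStube b hb).2.1 hx)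
  have htilde_inter : ∀ (b : Finset ℕ) (x : ℕ),
      x ∈ tildeT Γt Tt b → x ∈ G1.verts → x ∈ b := by
    intro b x hx hxv
    rcases (htilde_mem b x).mp hx with h | ⟨m, hm, _, hx'⟩
    · exact h
    · exact absurd hxv (hMdisjG1 m hm x hx')
  have htilde_inj : ∀ b ⊆ G1.verts, ∀ c ⊆ G1.verts,
      tildeT Γt Tt b = tildeT Γt Tt c → b = c := by
    intro b h2 c h3 heq
    ext x
    constructor
    · intro hx
      refine htilde_inter c x ?_ (h2 hx)
      rw [← heq]
      exact auxA_subset_tildeT Γt Tt b hx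
    · intro hx
      refine htilde_inter b x ?_ (h3 hx)
      rw [heq]
      exact auxA_subset_tildeT Γt Tt c hx
  have htilde_mono : ∀ b c : Finset ℕ, b ⊆ c → c ⊆ G1.verts →
      tildeT Γt Tt b ⊆ tildeT Γt Tt c := by
    intro b c hss h3 x hx
    rcases (htilde_mem b x).mp hx with h | ⟨m, hm, hl, hx'⟩
    · exact auxA_subset_tildeT Γt Tt c (hss h)
    · refine (htilde_mem c x).mpr (Or.inr ⟨m, hm, ?_, hx'⟩)
      obtain ⟨p, hp, q, hq, hadj⟩ := (auxA_linked_def.mp hl).2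
      exact hlinked m hm c h3 ⟨p, hp, q, hss hq, hadj⟩
  have hmemU' : ∀ r, r ∈ U' ↔ (r ∈ T ∧ r ⊆ st) ∨
      ∃ b ∈ S, b ⊆ s ∧ r = tildeT Γt Tt b := by
    intro r
    rw [hU'def, auxA_mem_restrictT, auxA_mem_gammaSub, ← hΓtdef, ← hTtdef]
    constructor
    · rintro ⟨h | ⟨b, hb, rfl⟩, hrst⟩
      · exact Or.inl ⟨h, hrst⟩
      · exact Or.inr ⟨b, hb, htilde_sup b hb hrst, rfl⟩
    · rintro (⟨h1, h2⟩ | ⟨b, hb, hss, rfl⟩)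
      · exact ⟨Or.inl h1, h2⟩
      · exact ⟨Or.inr ⟨b, hb, rfl⟩, htilde_sub b hss⟩
  have hU'sub : ∀ r ∈ U', r ⊆ st := by
    intro r hr
    rcases (hmemU' r).mp hr with ⟨_, h⟩ | ⟨b, _, hss, rfl⟩
    · exact h
    · exact htilde_sub b hss
  have hMLmem : ∀ b, b ∈ ML ↔ (b ∈ S ∧ b ⊆ s ∧ b ≠ s) ∧
      (∀ r ∈ S, r ⊆ s → r ≠ s → b ⊆ r → b = r) := by
    intro b
    rw [hMLdef, auxA_mem_MaxtP, hHLv, hSLdef]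
    simp only [auxA_mem_restrictT]
    constructor
    · rintro ⟨⟨⟨h1, h2⟩, h3⟩, h4⟩
      exact ⟨⟨h1, h2, h3⟩, fun r hr hrs hrne hsr => h4 r ⟨hr, hrs⟩ hrne hsr⟩
    · rintro ⟨⟨h1, h2, h3⟩, h4⟩
      exact ⟨⟨⟨h1, h2⟩, h3⟩, fun r hr hrne hsr => h4 r hr.1 hr.2 hrne hsr⟩
  have hMRmem : ∀ f, f ∈ MR ↔ (f ∈ U' ∧ f ≠ st) ∧
      (∀ r ∈ U', r ≠ st → f ⊆ r → f = r) := by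
    intro f
    rw [hMRdef, auxA_mem_MaxtP, hHRv]
  have hMLs : ∀ b ∈ ML, b ∈ S ∧ b ⊆ s ∧ b ≠ s := fun b h => ((hMLmem b).mp h).1
  have hTst : ∀ r, r ∈ T → r ⊆ st → ∃ m ∈ M, Linked Γt m s ∧ r ⊆ m := by
    intro r hrT hrst
    have hrt : r ⊆ t := hrst.trans hstt
    have hrne : r ≠ t := by
      rintro rfl
      exact hstne (Finset.Subset.antisymm hstt hrst)
    have hrP : r ∈ properTubes Γt Tt := by
      rw [auxA_mem_properTubes, hΓtv, hTtdef, auxA_mem_restrictT]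
      exact ⟨⟨hrT, hrt⟩, hrne⟩
    obtain ⟨m, hmP, hrm, hmax⟩ := auxA_exists_max _ hrP
    have hmM : m ∈ M := by
      rw [hMdef, auxA_mem_MaxtP]
      rw [auxA_mem_properTubes] at hmP
      exact ⟨hmP, fun r' hr' hne' hsub' =>
        hmax r' (auxA_mem_properTubes.mpr ⟨hr', hne'⟩) hsub'⟩
    obtain ⟨x, hxr⟩ := (hTtube r hrT).1
    rcases (hmemst x).mp (hrst hxr) with hxs | ⟨m', hm', hl', hxm'⟩
    · exact absurd (hsub hxs) (hMdisjG1 m hmM x (hrm hxr))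
    · have heq : m' = m := hMeq m' hm' m hmM x hxm' (hrm hxr)
      rw [heq] at hl'
      exact ⟨m, hmM, hl', hrm⟩
  have hMU' : ∀ m ∈ M, Linked Γt m s → m ∈ U' ∧ m ≠ st := by
    intro m hm hl
    have h1 : m ∈ U' := (hmemU' m).mpr (Or.inl ⟨((hMmem m).mp hm).1.1,
      fun x hx => (hmemst x).mpr (Or.inr ⟨m, hm, hl, hx⟩)⟩)
    have h2 : m ≠ st := by
      intro heq
      obtain ⟨x, hx⟩ := hsne
      have hxm : x ∈ m := by rw [heq]; exact hsst hx
      exact hMdisjG1 m hm x hxm (hsub hx)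
    exact ⟨h1, h2⟩
  have htilde_ne : ∀ b ∈ S, b ⊆ s → b ≠ s → tildeT Γt Tt b ≠ st := by
    intro b hb hss hne heq
    exact hne (htilde_inj b (hss.trans hsub) s hsub (heq.trans hstdef))
  have hback : ∀ b ∈ S, b ⊆ s → b ≠ s →
      (∀ r ∈ U', r ≠ st → tildeT Γt Tt b ⊆ r → tildeT Γt Tt b = r) → b ∈ ML := by
    intro b hb hss hne hmax
    refine (hMLmem b).mpr ⟨⟨hb, hss, hne⟩, fun r hrS hrs hrne hsr => ?_⟩
    have h1 : tildeT Γt Tt b ⊆ tildeT Γt Tt r := htilde_mono b r hsr (hrs.trans hsub)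
    have h2 : tildeT Γt Tt r ∈ U' := (hmemU' _).mpr (Or.inr ⟨r, hrS, hrs, rfl⟩)
    have h3 : tildeT Γt Tt r ≠ st := htilde_ne r hrS hrs hrne
    exact htilde_inj b (hss.trans hsub) r (hrs.trans hsub) (hmax _ h2 h3 h1)
  have ha : ∀ b ∈ ML, tildeT Γt Tt b ∈ MR := by
    intro b hbML
    obtain ⟨⟨h1, h2, h3⟩, hmax⟩ := (hMLmem b).mp hbML
    refine (hMRmem _).mpr ⟨⟨(hmemU' _).mpr (Or.inr ⟨b, h1, h2, rfl⟩),
      htilde_ne b h1 h2 h3⟩, ?_⟩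
    intro r hrU hrne hsubr
    rcases (hmemU' r).mp hrU with ⟨hrT, hrst⟩ | ⟨c, hcS, hcs, rfl⟩
    · obtain ⟨m, hmM, hl, hrm⟩ := hTst r hrT hrst
      obtain ⟨x, hx⟩ := (hStube b h1).1
      have hxm : x ∈ m := hrm (hsubr (auxA_subset_tildeT Γt Tt b hx))
      exact absurd ((hStube b h1).2.1 hx) (hMdisjG1 m hmM x hxm)
    · have hsubbc : b ⊆ c := by
        intro x hx
        exact htilde_inter c x (hsubr (auxA_subset_tildeT Γt Tt b hx))
          ((hStube b h1).2.1 hx)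
      have hnec : c ≠ s := fun heqc => hrne (by rw [heqc, ← hstdef])
      rw [hmax c hcS hcs hnec hsubbc]
  have hb : ∀ m ∈ M, Linked Γt m s → ∃ f ∈ MR, m ⊆ f ∧ f ⊆ st := by
    intro m hm hl
    obtain ⟨h1, h2⟩ := hMU' m hm hl
    have hmP : m ∈ properTubes HR U' :=
      auxA_mem_properTubes.mpr ⟨h1, by rw [hHRv]; exact h2⟩
    obtain ⟨f, hfP, hmf, hmax⟩ := auxA_exists_max _ hmP
    have hfMR : f ∈ MR := by
      rw [hMRdef, auxA_mem_MaxtP]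
      rw [auxA_mem_properTubes] at hfP
      exact ⟨hfP, fun r' hr' hne' hsub' =>
        hmax r' (auxA_mem_properTubes.mpr ⟨hr', hne'⟩) hsub'⟩
    exact ⟨f, hfMR, hmf, hU'sub f (auxA_mem_properTubes.mp hfP).1⟩
  have hcd : ∀ f ∈ MR, (f ∈ M ∧ Linked Γt f s) ∨ ∃ b ∈ ML, f = tildeT Γt Tt b := by
    intro f hf
    obtain ⟨⟨hfU, hfne⟩, hmax⟩ := (hMRmem f).mp hf
    rcases (hmemU' f).mp hfU with ⟨hfT, hfst⟩ | ⟨b, hbS, hbs, rfl⟩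
    · obtain ⟨m, hmM, hl, hfm⟩ := hTst f hfT hfst
      obtain ⟨h1, h2⟩ := hMU' m hmM hl
      have heq : f = m := hmax m h1 h2 hfm
      rw [heq]
      exact Or.inl ⟨hmM, hl⟩
    · have hneb : b ≠ s := fun heqb => hfne (by rw [heqb, ← hstdef])
      exact Or.inr ⟨b, hback b hbS hbs hneb
        (fun r hr hrne hsub' => hmax r hr hrne hsub'), rfl⟩
  have hveq : (gammaStar HL SL).verts = (gammaStar HR U').verts := by
    have hL : (gammaStar HL SL).verts = s \ ML.biUnion id := rfl
    have hR : (gammaStar HR U').verts = st \ MR.biUnion id := rfl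
    rw [hL, hR]
    ext x
    rw [Finset.mem_sdiff, Finset.mem_sdiff]
    constructor
    · rintro ⟨hxs, hnb⟩
      refine ⟨hsst hxs, fun hmem => ?_⟩
      obtain ⟨f, hfMR, hxf⟩ := Finset.mem_biUnion.mp hmem
      rcases hcd f hfMR with ⟨hfM, _⟩ | ⟨b, hbML, heq⟩
      · exact hMdisjG1 f hfM x hxf (hsub hxs)
      · rw [heq] at hxf
        exact hnb (Finset.mem_biUnion.mpr ⟨b, hbML, htilde_inter b x hxf (hsub hxs)⟩)
    · rintro ⟨hxst, hnb⟩
      have hxs : x ∈ s := by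
        rcases (hmemst x).mp hxst with h | ⟨m, hm, hl, hxm⟩
        · exact h
        · obtain ⟨f, hfMR, hmf, _⟩ := hb m hm hl
          exact absurd (Finset.mem_biUnion.mpr ⟨f, hfMR, hmf hxm⟩) hnb
      refine ⟨hxs, fun hmem => ?_⟩
      obtain ⟨b, hbML, hxb⟩ := Finset.mem_biUnion.mp hmem
      exact hnb (Finset.mem_biUnion.mpr ⟨tildeT Γt Tt b, ha b hbML,
        auxA_subset_tildeT Γt Tt b hxb⟩)
  have hVL : ∀ v, v ∈ (gammaStar HL SL).verts ↔ v ∈ s ∧ ∀ b ∈ ML, v ∉ b := by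
    intro v
    have hL : (gammaStar HL SL).verts = s \ ML.biUnion id := rfl
    rw [hL, Finset.mem_sdiff]
    constructor
    · rintro ⟨h1, h2⟩
      exact ⟨h1, fun b hbML hv => h2 (Finset.mem_biUnion.mpr ⟨b, hbML, hv⟩)⟩
    · rintro ⟨h1, h2⟩
      refine ⟨h1, fun hmem => ?_⟩
      obtain ⟨b, hbML, hv⟩ := Finset.mem_biUnion.mp hmem
      exact h2 b hbML hv
  have hGadj_of_Γt : ∀ a b, Γt.Adj a b → G.Adj a b := fun a b h => ((hΓtAdj a b).mp h).2.2
  have hΓt_of_G : ∀ a b, a ∈ t → b ∈ t → G.Adj a b → Γt.Adj a b :=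
    fun a b h1 h2 h3 => (hΓtAdj a b).mpr ⟨h1, h2, h3⟩
  have hfwd : ∀ v u b, b ∈ ML → u ∈ b → HL.Adj v u →
      ∃ u₀ ∈ tildeT Γt Tt b, HR.Adj v u₀ := by
    intro v u b hbML hu hadj
    obtain ⟨hvs, hus, hG1a⟩ := (hHLAdj v u).mp hadj
    obtain ⟨hbS, hbs, -⟩ := hMLs b hbML
    obtain ⟨hvu, hvG1, huG1, hcase⟩ := (hG1Adj v u).mp hG1a
    rcases hcase with h | ⟨m, hmM, ⟨p, hp, hvp⟩, ⟨q, hq, huq⟩⟩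
    · exact ⟨u, auxA_subset_tildeT Γt Tt b hu,
        (hHRAdj v u).mpr ⟨hsst hvs, hsst (hbs hu), hGadj_of_Γt _ _ h⟩⟩
    · have hl : Linked Γt m b := hlinked m hmM b (hbs.trans hsub)
        ⟨q, hq, u, hu, Γt.symm _ _ huq⟩
      have hmsub : m ⊆ tildeT Γt Tt b := fun x hx =>
        (htilde_mem b x).mpr (Or.inr ⟨m, hmM, hl, hx⟩)
      refine ⟨p, hmsub hp, (hHRAdj v p).mpr ⟨hsst hvs, ?_, hGadj_of_Γt _ _ hvp⟩⟩
      exact htilde_sub b hbs (hmsub hp)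
  have hbwd : ∀ v u b, v ∈ (gammaStar HL SL).verts → b ∈ ML →
      u ∈ tildeT Γt Tt b → HR.Adj v u → ∃ z ∈ b, HL.Adj v z := by
    intro v u b hv hbML hu hadj
    obtain ⟨hvs, hvnot⟩ := (hVL v).mp hv
    obtain ⟨hbS, hbs, -⟩ := hMLs b hbML
    obtain ⟨hvst, hust, hGvu⟩ := (hHRAdj v u).mp hadj
    rcases (htilde_mem b u).mp hu with hub | ⟨m, hmM, hl, hum⟩
    · refine ⟨u, hub, (hHLAdj v u).mpr ⟨hvs, hbs hub, (hG1Adj v u).mpr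
        ⟨?_, hsub hvs, hsub (hbs hub), Or.inl (hΓt_of_G v u (hG1t (hsub hvs))
          (hG1t (hsub (hbs hub))) hGvu)⟩⟩⟩
      intro heq
      exact hvnot b hbML (by rw [heq]; exact hub)
    · obtain ⟨p, hpm, z, hz, hpz⟩ := (auxA_linked_def.mp hl).2
      refine ⟨z, hz, (hHLAdj v z).mpr ⟨hvs, hbs hz, (hG1Adj v z).mpr
        ⟨?_, hsub hvs, hsub (hbs hz), Or.inr ⟨m, hmM,
          ⟨u, hum, hΓt_of_G v u (hG1t (hsub hvs)) (hMsubt m hmM hum) hGvu⟩,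
          ⟨p, hpm, Γt.symm _ _ hpz⟩⟩⟩⟩⟩
      intro heq
      exact hvnot b hbML (by rw [heq]; exact hz)
  refine ⟨hveq, fun v w => ?_⟩
  rw [hLAdj v w, hRAdj v w]
  constructor
  · rintro ⟨hvw, hv, hw, hE⟩
    refine ⟨hvw, by rw [← hveq]; exact hv, by rw [← hveq]; exact hw, ?_⟩
    obtain ⟨hvs, -⟩ := (hVL v).mp hv
    obtain ⟨hws, -⟩ := (hVL w).mp hw
    rcases hE with hE | ⟨b, hbML, ⟨u, hu, hadjvu⟩, ⟨u', hu', hadjwu'⟩⟩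
    · obtain ⟨-, -, hG1vw⟩ := (hHLAdj v w).mp hE
      obtain ⟨-, -, -, hcase⟩ := (hG1Adj v w).mp hG1vw
      rcases hcase with h | ⟨m, hmM, ⟨p, hp, hvp⟩, ⟨q, hq, hwq⟩⟩
      · exact Or.inl ((hHRAdj v w).mpr ⟨hsst hvs, hsst hws, hGadj_of_Γt _ _ h⟩)
      · have hl : Linked Γt m s := hlinked m hmM s hsub ⟨p, hp, v, hvs, Γt.symm _ _ hvp⟩
        obtain ⟨f, hfMR, hmf, hfst⟩ := hb m hmM hl
        exact Or.inr ⟨f, hfMR,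
          ⟨p, hmf hp, (hHRAdj v p).mpr ⟨hsst hvs, hfst (hmf hp), hGadj_of_Γt _ _ hvp⟩⟩,
          ⟨q, hmf hq, (hHRAdj w q).mpr ⟨hsst hws, hfst (hmf hq), hGadj_of_Γt _ _ hwq⟩⟩⟩
    · obtain ⟨u₀, hu₀, hadj₀⟩ := hfwd v u b hbML hu hadjvu
      obtain ⟨u₁, hu₁, hadj₁⟩ := hfwd w u' b hbML hu' hadjwu'
      exact Or.inr ⟨tildeT Γt Tt b, ha b hbML, ⟨u₀, hu₀, hadj₀⟩, ⟨u₁, hu₁, hadj₁⟩⟩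
  · rintro ⟨hvw, hv, hw, hE⟩
    have hv' : v ∈ (gammaStar HL SL).verts := by rw [hveq]; exact hv
    have hw' : w ∈ (gammaStar HL SL).verts := by rw [hveq]; exact hw
    refine ⟨hvw, hv', hw', ?_⟩
    obtain ⟨hvs, -⟩ := (hVL v).mp hv'
    obtain ⟨hws, -⟩ := (hVL w).mp hw'
    rcases hE with hE | ⟨f, hfMR, ⟨u, hu, hadjvu⟩, ⟨u', hu', hadjwu'⟩⟩
    · obtain ⟨-, -, hGvw⟩ := (hHRAdj v w).mp hE
      exact Or.inl ((hHLAdj v w).mpr ⟨hvs, hws, (hG1Adj v w).mpr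
        ⟨hvw, hsub hvs, hsub hws,
          Or.inl (hΓt_of_G v w (hG1t (hsub hvs)) (hG1t (hsub hws)) hGvw)⟩⟩)
    · rcases hcd f hfMR with ⟨hfM, hlf⟩ | ⟨b, hbML, heq⟩
      · obtain ⟨-, -, hGvu⟩ := (hHRAdj v u).mp hadjvu
        obtain ⟨-, -, hGwu'⟩ := (hHRAdj w u').mp hadjwu'
        exact Or.inl ((hHLAdj v w).mpr ⟨hvs, hws, (hG1Adj v w).mpr
          ⟨hvw, hsub hvs, hsub hws, Or.inr ⟨f, hfM,
            ⟨u, hu, hΓt_of_G v u (hG1t (hsub hvs)) (hMsubt f hfM hu) hGvu⟩,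
            ⟨u', hu', hΓt_of_G w u' (hG1t (hsub hws)) (hMsubt f hfM hu') hGwu'⟩⟩⟩⟩)
      · rw [heq] at hu hu'
        obtain ⟨z, hz, hadjz⟩ := hbwd v u b hv' hbML hu hadjvu
        obtain ⟨z', hz', hadjz'⟩ := hbwd w u' b hw' hbML hu' hadjwu'
        exact Or.inr ⟨b, hbML, ⟨z, hz, hadjz⟩, ⟨z', hz', hadjz'⟩⟩
end
end

section
/- (Associativity of substitution.) Let T be a tubing of a finite connected simple graph Γ, let t ∈ T, let S be a tubing of (Γ_t)_{T|_t}^*, and let s be a proper tube of S. Set s̃ := s ∪ (the union of the maximal proper tubes of T|_t linked in Γ_t to s), a tube of γ_t(T;S). Then for any tubing W of the graph (((Γ_t)_{T|_t}^*)_s)_{S|_s}^*, the family γ_s(S;W) is a tubing of (Γ_t)_{T|_t}^*, and γ_t(T; γ_s(S;W)) = γ_{s̃}(γ_t(T;S); W). -/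
open scoped Classical
open TensorProduct

noncomputable section

namespace CDTub

section Aux

variable {G : FinGraph} {T : Finset (Finset ℕ)}

lemma farApart_symm {a b : Finset ℕ} (h : FarApart G a b) : FarApart G b a := by
  refine ⟨h.1.symm, ?_⟩
  rintro ⟨v, hv, w, hw, hvw⟩
  exact h.2 ⟨w, hw, v, hv, G.symm _ _ hvw⟩

lemma mem_properTubes {r : Finset ℕ} : r ∈ properTubes G T ↔ r ∈ T ∧ r ≠ G.verts := by
  simp [properTubes]

lemma maxtP_subset : MaxtP G T ⊆ T := by
  intro m hm
  simp only [MaxtP, properTubes, Finset.mem_filter] at hm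
  exact hm.1.1

lemma mem_maxtP {m : Finset ℕ} : m ∈ MaxtP G T ↔
    (m ∈ T ∧ m ≠ G.verts) ∧ ∀ s' ∈ properTubes G T, m ⊆ s' → m = s' := by
  simp only [MaxtP, Finset.mem_filter, mem_properTubes]

lemma exists_maxt {r : Finset ℕ} (hr : r ∈ properTubes G T) :
    ∃ m ∈ MaxtP G T, r ⊆ m := by
  obtain ⟨m, hm, hmax⟩ : ∃ m ∈ (properTubes G T).filter (fun x => r ⊆ x),
      ∀ x ∈ (properTubes G T).filter (fun x => r ⊆ x), ¬ m < x := by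
    obtain ⟨m, hmM⟩ := Finset.exists_maximal
      (s := (properTubes G T).filter (fun x => r ⊆ x)) ⟨r, by simp [hr]⟩
    exact ⟨m, hmM.1, fun x hx hlt => hlt.not_ge (hmM.2 hx hlt.le)⟩
  rw [Finset.mem_filter] at hm
  refine ⟨m, Finset.mem_filter.mpr ⟨hm.1, ?_⟩, hm.2⟩
  intro s' hs' hsub
  by_contra hne
  exact hmax s' (Finset.mem_filter.mpr ⟨hs', hm.2.trans hsub⟩) (lt_of_le_of_ne hsub hne)

lemma maxt_farApart (hT : IsTubing G T) {m m' : Finset ℕ}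
    (hm : m ∈ MaxtP G T) (hm' : m' ∈ MaxtP G T) (hne : m ≠ m') : FarApart G m m' := by
  rw [mem_maxtP] at hm hm'
  rcases hT.2.2 m (hm.1.1) m' (hm'.1.1) hne with h | h | h
  · exact absurd (hm.2 m' (mem_properTubes.mpr hm'.1) h) hne
  · exact absurd (hm'.2 m (mem_properTubes.mpr hm.1) h).symm hne
  · exact h

lemma isTube_induce {t r : Finset ℕ} (hsub : r ⊆ t) (h : IsTube G r) :
    IsTube (induce G t) r := by
  refine ⟨h.1, hsub, ?_⟩
  intro v hv w hw
  refine Relation.ReflTransGen.mono ?_ _ _ (h.2.2 v hv w hw)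
  rintro a b ⟨ha, hb, hab⟩
  exact ⟨ha, hb, hsub ha, hsub hb, hab⟩

lemma vconn_of_induce {t r : Finset ℕ} (h : VConn (induce G t) r) : VConn G r := by
  intro v hv w hw
  refine Relation.ReflTransGen.mono ?_ _ _ (h v hv w hw)
  rintro a b ⟨ha, hb, _, _, hab⟩
  exact ⟨ha, hb, hab⟩

lemma compatible_induce {t a b : Finset ℕ} (h : Compatible G a b) :
    Compatible (induce G t) a b := by
  rcases h with h | h | h
  · exact Or.inl h
  · exact Or.inr (Or.inl h)
  · refine Or.inr (Or.inr ⟨h.1, ?_⟩)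
    rintro ⟨v, hv, w, hw, hvw⟩
    exact h.2 ⟨v, hv, w, hw, hvw.2.2⟩

lemma tubing_restrict (hT : IsTubing G T) {t : Finset ℕ} (ht : t ∈ T) :
    IsTubing (induce G t) (restrictT T t) := by
  refine ⟨?_, ?_, ?_⟩
  · exact Finset.mem_filter.mpr ⟨ht, Finset.Subset.refl t⟩
  · intro r hr
    rw [restrictT, Finset.mem_filter] at hr
    exact isTube_induce hr.2 (hT.2.1 r hr.1)
  · intro r hr r' hr' hne
    rw [restrictT, Finset.mem_filter] at hr hr'
    exact compatible_induce (hT.2.2 r hr.1 r' hr'.1 hne)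

lemma compatible_symm {G : FinGraph} {a b : Finset ℕ} (h : Compatible G a b) :
    Compatible G b a := by
  rcases h with h | h | h
  · exact Or.inr (Or.inl h)
  · exact Or.inl h
  · exact Or.inr (Or.inr (farApart_symm h))

lemma linked_mono {G : FinGraph} {m x x' : Finset ℕ} (h : Linked G m x) (hsub : x ⊆ x')
    (hd : Disjoint m x') : Linked G m x' := by
  obtain ⟨_, v, hv, w, hw, hvw⟩ := h
  exact ⟨hd, v, hv, w, hsub hw, hvw⟩

lemma rtg_within_symm {G : FinGraph} {u : Finset ℕ} :
    Symmetric (fun a b => a ∈ u ∧ b ∈ u ∧ G.Adj a b) := by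
  rintro a b ⟨ha, hb, hab⟩
  exact ⟨hb, ha, G.symm _ _ hab⟩

lemma rtg_mono_set {G : FinGraph} {s u : Finset ℕ} (h : s ⊆ u) {x y : ℕ}
    (hxy : Relation.ReflTransGen (fun a b => a ∈ s ∧ b ∈ s ∧ G.Adj a b) x y) :
    Relation.ReflTransGen (fun a b => a ∈ u ∧ b ∈ u ∧ G.Adj a b) x y :=
  Relation.ReflTransGen.mono (p := fun a b => a ∈ u ∧ b ∈ u ∧ G.Adj a b)
    (fun a b hab => ⟨h hab.1, h hab.2.1, hab.2.2⟩) _ _ hxy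

lemma rtg_lift {r r' : ℕ → ℕ → Prop} (h : ∀ a b, r a b → Relation.ReflTransGen r' a b)
    {x y : ℕ} (hxy : Relation.ReflTransGen r x y) : Relation.ReflTransGen r' x y := by
  induction hxy with
  | refl => exact Relation.ReflTransGen.refl
  | tail _ hbc ih => exact ih.trans (h _ _ hbc)

lemma vconn_glue (G : FinGraph) (a : Finset ℕ) (F : Finset (Finset ℕ))
    (ha : ∀ x ∈ a, ∀ y ∈ a, Relation.ReflTransGen
      (fun p q => p ∈ a ∪ F.biUnion id ∧ q ∈ a ∪ F.biUnion id ∧ G.Adj p q) x y)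
    (hF : ∀ f ∈ F, VConn G f ∧ ∃ v ∈ f, ∃ z ∈ a, G.Adj v z) :
    VConn G (a ∪ F.biUnion id) := by
  have hau : a ⊆ a ∪ F.biUnion id := Finset.subset_union_left
  have hfu : ∀ f ∈ F, f ⊆ a ∪ F.biUnion id := fun f hf =>
    (Finset.subset_biUnion_of_mem id hf).trans Finset.subset_union_right
  have key : ∀ x ∈ a ∪ F.biUnion id, ∀ y ∈ a, Relation.ReflTransGen
      (fun p q => p ∈ a ∪ F.biUnion id ∧ q ∈ a ∪ F.biUnion id ∧ G.Adj p q) x y := by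
    intro x hx y hy
    rcases Finset.mem_union.mp hx with hxa | hxf
    · exact ha x hxa y hy
    · obtain ⟨f, hf, hxf⟩ := Finset.mem_biUnion.mp hxf
      obtain ⟨hfc, v, hv, z, hz, hvz⟩ := hF f hf
      have h1 := rtg_mono_set (hfu f hf) (hfc x hxf v hv)
      have h2 : Relation.ReflTransGen
          (fun p q => p ∈ a ∪ F.biUnion id ∧ q ∈ a ∪ F.biUnion id ∧ G.Adj p q) v z :=
        Relation.ReflTransGen.single ⟨hfu f hf hv, hau hz, hvz⟩
      exact (h1.trans h2).trans (ha z hz y hy)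
  intro x hx y hy
  rcases Finset.mem_union.mp hy with hya | hyf
  · exact key x hx y hya
  · obtain ⟨f, hf, _⟩ := Finset.mem_biUnion.mp hyf
    obtain ⟨_, v, hv, z, hz, _⟩ := hF f hf
    exact (key x hx z hz).trans (Std.Symm.symm (self := @Relation.ReflTransGen.stdSymm _ _
      ⟨fun a b h => rtg_within_symm h⟩) _ _ (key y hy z hz))

end Aux

section Tilde

variable {H : FinGraph} {U : Finset (Finset ℕ)}

lemma gammaStar_verts : (gammaStar H U).verts = H.verts \ (MaxtP H U).biUnion id := rfl

lemma tildeT_eq (x : Finset ℕ) :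
    tildeT H U x = x ∪ ((MaxtP H U).filter (fun m => Linked H m x)).biUnion id := rfl

lemma maxt_isTube (hU : IsTubing H U) {m : Finset ℕ} (hm : m ∈ MaxtP H U) : IsTube H m :=
  hU.2.1 m (maxtP_subset hm)

lemma maxt_disjoint_star {m : Finset ℕ} (hm : m ∈ MaxtP H U) :
    Disjoint m (gammaStar H U).verts := by
  rw [Finset.disjoint_left]
  intro x hx hx'
  rw [gammaStar_verts, Finset.mem_sdiff] at hx'
  exact hx'.2 (Finset.mem_biUnion.mpr ⟨m, hm, hx⟩)

lemma star_verts_subset : (gammaStar H U).verts ⊆ H.verts := by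
  rw [gammaStar_verts]; exact Finset.sdiff_subset

lemma maxt_pairwise_disjoint (hU : IsTubing H U) {m m' : Finset ℕ}
    (hm : m ∈ MaxtP H U) (hm' : m' ∈ MaxtP H U) (hne : m ≠ m') : Disjoint m m' :=
  (maxt_farApart hU hm hm' hne).1

lemma tilde_subset_verts (hU : IsTubing H U) {x : Finset ℕ}
    (hx : x ⊆ (gammaStar H U).verts) : tildeT H U x ⊆ H.verts := by
  rw [tildeT_eq]
  refine Finset.union_subset (hx.trans star_verts_subset) ?_
  intro a ha
  obtain ⟨m, hm, ham⟩ := Finset.mem_biUnion.mp ha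
  exact (maxt_isTube hU (Finset.mem_filter.mp hm).1).2.1 ham

lemma mem_of_mem_tilde_star {x : Finset ℕ} {a : ℕ} (ha : a ∈ tildeT H U x)
    (ha' : a ∈ (gammaStar H U).verts) : a ∈ x := by
  rw [tildeT_eq, Finset.mem_union] at ha
  rcases ha with h | h
  · exact h
  · obtain ⟨m, hm, ham⟩ := Finset.mem_biUnion.mp h
    exact absurd ha' (Finset.disjoint_left.mp
      (maxt_disjoint_star (Finset.mem_filter.mp hm).1) ham)

lemma tilde_mono {x x' : Finset ℕ} (hx' : x' ⊆ (gammaStar H U).verts) (hxx' : x ⊆ x') :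
    tildeT H U x ⊆ tildeT H U x' := by
  rw [tildeT_eq, tildeT_eq]
  refine Finset.union_subset (hxx'.trans Finset.subset_union_left) ?_
  refine Finset.biUnion_subset.mpr ?_
  intro m hm
  rw [Finset.mem_filter] at hm
  have hd : Disjoint m x' := (maxt_disjoint_star hm.1).mono_right hx'
  refine Finset.Subset.trans ?_ Finset.subset_union_right
  exact Finset.subset_biUnion_of_mem id (Finset.mem_filter.mpr ⟨hm.1, linked_mono hm.2 hxx' hd⟩)

lemma tilde_inj {x x' : Finset ℕ} (hx : x ⊆ (gammaStar H U).verts)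
    (hx' : x' ⊆ (gammaStar H U).verts) (h : tildeT H U x = tildeT H U x') : x = x' := by
  apply Finset.Subset.antisymm
  · intro a ha
    exact mem_of_mem_tilde_star (h ▸ (Finset.mem_union_left _ ha : a ∈ tildeT H U x)) (hx ha)
  · intro a ha
    exact mem_of_mem_tilde_star (h ▸ (Finset.mem_union_left _ ha : a ∈ tildeT H U x')) (hx' ha)

lemma subset_tilde (x : Finset ℕ) : x ⊆ tildeT H U x := Finset.subset_union_left

lemma linked_subset_tilde {m x : Finset ℕ} (hm : m ∈ MaxtP H U) (h : Linked H m x) :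
    m ⊆ tildeT H U x := by
  rw [tildeT_eq]
  have hmem : m ∈ (MaxtP H U).filter (fun m' => Linked H m' x) :=
    Finset.mem_filter.mpr ⟨hm, h⟩
  exact (Finset.subset_biUnion_of_mem id hmem).trans Finset.subset_union_right

lemma linked_of_subset_tilde (hU : IsTubing H U) {m x : Finset ℕ} (hm : m ∈ MaxtP H U)
    (hx : x ⊆ (gammaStar H U).verts) (h : m ⊆ tildeT H U x) : Linked H m x := by
  obtain ⟨a, ha⟩ := (maxt_isTube hU hm).1
  have ha' := h ha
  rw [tildeT_eq, Finset.mem_union] at ha'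
  rcases ha' with h' | h'
  · exact absurd (hx h') (Finset.disjoint_left.mp (maxt_disjoint_star hm) ha)
  · obtain ⟨m1, hm1, ham1⟩ := Finset.mem_biUnion.mp h'
    rw [Finset.mem_filter] at hm1
    have : m = m1 := by
      by_contra hne
      exact Finset.disjoint_left.mp (maxt_pairwise_disjoint hU hm hm1.1 hne) ha ham1
    exact this ▸ hm1.2

lemma subset_linked_maxt (hU : IsTubing H U) {r x : Finset ℕ} (hr : r ∈ properTubes H U)
    (hx : x ⊆ (gammaStar H U).verts) (hrs : r ⊆ tildeT H U x) :
    ∃ m ∈ MaxtP H U, Linked H m x ∧ r ⊆ m := by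
  obtain ⟨m0, hm0, hrm0⟩ := exists_maxt hr
  obtain ⟨a, ha⟩ := (hU.2.1 r (mem_properTubes.mp hr).1).1
  have ha' := hrs ha
  rw [tildeT_eq, Finset.mem_union] at ha'
  rcases ha' with h' | h'
  · exact absurd (hx h') (Finset.disjoint_left.mp (maxt_disjoint_star hm0) (hrm0 ha))
  · obtain ⟨m1, hm1, ham1⟩ := Finset.mem_biUnion.mp h'
    rw [Finset.mem_filter] at hm1
    have : m0 = m1 := by
      by_contra hne
      exact Finset.disjoint_left.mp (maxt_pairwise_disjoint hU hm0 hm1.1 hne) (hrm0 ha) ham1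
    exact ⟨m0, hm0, this ▸ hm1.2, hrm0⟩

end Tilde

section LemA

variable {H : FinGraph} {S : Finset (Finset ℕ)} {s : Finset ℕ}

lemma induce_verts (G : FinGraph) (t : Finset ℕ) : (induce G t).verts = t := rfl

lemma mem_restrictT {T : Finset (Finset ℕ)} {t x : Finset ℕ} :
    x ∈ restrictT T t ↔ x ∈ T ∧ x ⊆ t := Finset.mem_filter

/-- Adjacency in a `gammaStar` graph, unfolded. -/
lemma gammaStar_adj {v w : ℕ} :
    (gammaStar H S).Adj v w ↔ v ≠ w ∧ v ∈ (gammaStar H S).verts ∧ w ∈ (gammaStar H S).verts ∧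
      (H.Adj v w ∨ ∃ f ∈ MaxtP H S, (∃ u ∈ f, H.Adj v u) ∧ ∃ u' ∈ f, H.Adj w u') :=
  Iff.rfl

lemma induce_adj {t : Finset ℕ} {v w : ℕ} :
    (induce H t).Adj v w ↔ v ∈ t ∧ w ∈ t ∧ H.Adj v w := Iff.rfl

lemma tilde2_subset_s (hS : IsTubing H S) (hs : s ∈ S) {w : Finset ℕ}
    (hw : w ⊆ (gammaStar (induce H s) (restrictT S s)).verts) :
    tildeT (induce H s) (restrictT S s) w ⊆ s :=
  tilde_subset_verts (tubing_restrict hS hs) hw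

lemma tildeS_isTube (hS : IsTubing H S) (hs : s ∈ S) {w : Finset ℕ}
    (hw : IsTube (gammaStar (induce H s) (restrictT S s)) w) :
    IsTube H (tildeT (induce H s) (restrictT S s) w) := by
  set H2 := induce H s with hH2
  set U2 := restrictT S s with hU2def
  have hU2 : IsTubing H2 U2 := tubing_restrict hS hs
  have hss : s ⊆ H.verts := (hS.2.1 s hs).2.1
  have hwv : w ⊆ (gammaStar H2 U2).verts := hw.2.1
  have hws : w ⊆ s := hwv.trans star_verts_subset
  refine ⟨hw.1.mono (subset_tilde w), (tilde_subset_verts hU2 hwv).trans hss, ?_⟩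
  rw [tildeT_eq]
  set F := (MaxtP H2 U2).filter (fun m => Linked H2 m w) with hF
  have hFsub : ∀ f ∈ F, f ⊆ s := by
    intro f hf
    exact (maxt_isTube hU2 (Finset.mem_filter.mp hf).1).2.1
  have hfu : ∀ f ∈ F, f ⊆ w ∪ F.biUnion id := fun f hf =>
    (Finset.subset_biUnion_of_mem id hf).trans Finset.subset_union_right
  refine vconn_glue H w F ?_ ?_
  · intro x hx y hy
    refine rtg_lift ?_ (hw.2.2 x hx y hy)
    rintro a b ⟨haw, hbw, hadj⟩
    obtain ⟨hne, hav, hbv, hor⟩ := hadj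
    have hau : a ∈ w ∪ F.biUnion id := Finset.mem_union_left _ haw
    have hbu : b ∈ w ∪ F.biUnion id := Finset.mem_union_left _ hbw
    rcases hor with h | ⟨f, hf, ⟨u, hu, hau'⟩, ⟨u', hu', hbu'⟩⟩
    · exact Relation.ReflTransGen.single ⟨hau, hbu, h.2.2⟩
    · have hfF : f ∈ F := by
        refine Finset.mem_filter.mpr ⟨hf, (maxt_disjoint_star hf).mono_right hwv, ?_⟩
        exact ⟨u, hu, a, haw, H2.symm _ _ hau'⟩
      have hfsub := hfu f hfF
      have h1 : Relation.ReflTransGen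
          (fun p q => p ∈ w ∪ F.biUnion id ∧ q ∈ w ∪ F.biUnion id ∧ H.Adj p q) a u :=
        Relation.ReflTransGen.single ⟨hau, hfsub hu, hau'.2.2⟩
      have h2 := rtg_mono_set hfsub
        ((maxt_isTube hU2 hf).2.2 u hu u' hu')
      have h2' : Relation.ReflTransGen
          (fun p q => p ∈ w ∪ F.biUnion id ∧ q ∈ w ∪ F.biUnion id ∧ H.Adj p q) u u' := by
        refine rtg_lift ?_ h2
        rintro p q ⟨hp, hq, hpq⟩
        exact Relation.ReflTransGen.single ⟨hp, hq, hpq.2.2⟩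
      have h3 : Relation.ReflTransGen
          (fun p q => p ∈ w ∪ F.biUnion id ∧ q ∈ w ∪ F.biUnion id ∧ H.Adj p q) u' b :=
        Relation.ReflTransGen.single ⟨hfsub hu', hbu, H.symm _ _ hbu'.2.2⟩
      exact (h1.trans h2').trans h3
  · intro f hf
    obtain ⟨hfM, hlink⟩ := Finset.mem_filter.mp hf
    obtain ⟨_, v, hv, z, hz, hvz⟩ := hlink
    exact ⟨vconn_of_induce (maxt_isTube hU2 hfM).2.2, v, hv, z, hz, hvz.2.2⟩

lemma not_linked_both (hS : IsTubing H S) (hs : s ∈ S) {w w' : Finset ℕ}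
    (hww : FarApart (gammaStar (induce H s) (restrictT S s)) w w')
    (hw : w ⊆ (gammaStar (induce H s) (restrictT S s)).verts)
    (hw' : w' ⊆ (gammaStar (induce H s) (restrictT S s)).verts)
    {f : Finset ℕ} (hf : f ∈ MaxtP (induce H s) (restrictT S s))
    (h1 : Linked (induce H s) f w) (h2 : Linked (induce H s) f w') : False := by
  obtain ⟨_, v, hv, x, hx, hadj⟩ := h1
  obtain ⟨_, v', hv', x', hx', hadj'⟩ := h2
  have hne : x ≠ x' := by
    intro h
    exact Finset.disjoint_left.mp hww.1 hx (h ▸ hx')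
  refine hww.2 ⟨x, hx, x', hx', ?_⟩
  exact ⟨hne, hw hx, hw' hx', Or.inr ⟨f, hf, ⟨v, hv, (induce H s).symm _ _ hadj⟩,
    ⟨v', hv', (induce H s).symm _ _ hadj'⟩⟩⟩

lemma compat_S_tilde (hS : IsTubing H S) (hs : s ∈ S) {x : Finset ℕ} (hx : x ∈ S)
    {w : Finset ℕ} (hw : IsTube (gammaStar (induce H s) (restrictT S s)) w) :
    Compatible H x (tildeT (induce H s) (restrictT S s) w) := by
  set H2 := induce H s with hH2
  set U2 := restrictT S s with hU2def
  have hU2 : IsTubing H2 U2 := tubing_restrict hS hs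
  have hwv : w ⊆ (gammaStar H2 U2).verts := hw.2.1
  have hts : tildeT H2 U2 w ⊆ s := tilde2_subset_s hS hs hwv
  by_cases hxs : x = s
  · exact Or.inr (Or.inl (hxs ▸ hts))
  rcases hS.2.2 x hx s hs hxs with hsub | hsub | hfar
  · -- x ⊆ s, x ≠ s
    have hxp : x ∈ properTubes H2 U2 :=
      mem_properTubes.mpr ⟨mem_restrictT.mpr ⟨hx, hsub⟩, hxs⟩
    obtain ⟨m', hm', hxm'⟩ := exists_maxt hxp
    by_cases hlk : Linked H2 m' w
    · exact Or.inl (hxm'.trans (linked_subset_tilde hm' hlk))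
    · refine Or.inr (Or.inr ⟨?_, ?_⟩)
      · refine Finset.disjoint_left.mpr ?_
        intro a ha ha'
        rw [tildeT_eq, Finset.mem_union] at ha'
        rcases ha' with h' | h'
        · exact Finset.disjoint_left.mp ((maxt_disjoint_star hm').mono_right hwv)
            (hxm' ha) h'
        · obtain ⟨m'', hm'', ham''⟩ := Finset.mem_biUnion.mp h'
          rw [Finset.mem_filter] at hm''
          have hne : m' ≠ m'' := fun h => hlk (h ▸ hm''.2)
          exact Finset.disjoint_left.mp (maxt_pairwise_disjoint hU2 hm' hm''.1 hne)
            (hxm' ha) ham''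
      · rintro ⟨p, hp, q, hq, hpq⟩
        have hps : p ∈ s := hsub hp
        rw [tildeT_eq, Finset.mem_union] at hq
        rcases hq with hq | hq
        · refine hlk ⟨(maxt_disjoint_star hm').mono_right hwv, p, hxm' hp, q, hq, ?_⟩
          exact ⟨hps, (hwv.trans star_verts_subset) hq, hpq⟩
        · obtain ⟨m'', hm'', hqm''⟩ := Finset.mem_biUnion.mp hq
          rw [Finset.mem_filter] at hm''
          have hne : m' ≠ m'' := fun h => hlk (h ▸ hm''.2)
          refine (maxt_farApart hU2 hm' hm''.1 hne).2 ⟨p, hxm' hp, q, hqm'', ?_⟩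
          exact ⟨hps, (maxt_isTube hU2 hm''.1).2.1 hqm'', hpq⟩
  · exact Or.inr (Or.inl (hts.trans hsub))
  · refine Or.inr (Or.inr ⟨hfar.1.mono_right hts, ?_⟩)
    rintro ⟨p, hp, q, hq, hpq⟩
    exact hfar.2 ⟨p, hp, q, hts hq, hpq⟩

lemma compat_tilde_tilde (hS : IsTubing H S) (hs : s ∈ S) {w w' : Finset ℕ}
    (hw : IsTube (gammaStar (induce H s) (restrictT S s)) w)
    (hw' : IsTube (gammaStar (induce H s) (restrictT S s)) w')
    (hcomp : Compatible (gammaStar (induce H s) (restrictT S s)) w w') :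
    Compatible H (tildeT (induce H s) (restrictT S s) w)
      (tildeT (induce H s) (restrictT S s) w') := by
  set H2 := induce H s with hH2
  set U2 := restrictT S s with hU2def
  have hU2 : IsTubing H2 U2 := tubing_restrict hS hs
  have hwv : w ⊆ (gammaStar H2 U2).verts := hw.2.1
  have hw'v : w' ⊆ (gammaStar H2 U2).verts := hw'.2.1
  have hts : tildeT H2 U2 w ⊆ s := tilde2_subset_s hS hs hwv
  have hts' : tildeT H2 U2 w' ⊆ s := tilde2_subset_s hS hs hw'v
  rcases hcomp with hsub | hsub | hfar
  · exact Or.inl (tilde_mono hw'v hsub)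
  · exact Or.inr (Or.inl (tilde_mono hwv hsub))
  refine Or.inr (Or.inr ⟨?_, ?_⟩)
  · -- disjointness
    rw [tildeT_eq, tildeT_eq]
    rw [Finset.disjoint_union_left]
    constructor
    · rw [Finset.disjoint_union_right]
      refine ⟨hfar.1, ?_⟩
      rw [Finset.disjoint_biUnion_right]
      intro m'' hm''
      rw [Finset.mem_filter] at hm''
      exact ((maxt_disjoint_star hm''.1).mono_right hwv).symm
    · rw [Finset.disjoint_biUnion_left]
      intro m' hm'
      rw [Finset.mem_filter] at hm'
      rw [Finset.disjoint_union_right]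
      refine ⟨(maxt_disjoint_star hm'.1).mono_right hw'v, ?_⟩
      rw [Finset.disjoint_biUnion_right]
      intro m'' hm''
      rw [Finset.mem_filter] at hm''
      have hne : m' ≠ m'' := by
        intro h
        exact not_linked_both hS hs hfar hwv hw'v hm'.1 hm'.2 (h ▸ hm''.2)
      exact maxt_pairwise_disjoint hU2 hm'.1 hm''.1 hne
  · -- no edge
    rintro ⟨p, hp, q, hq, hpq⟩
    have hps : p ∈ s := hts hp
    have hqs : q ∈ s := hts' hq
    have hadj2 : H2.Adj p q := ⟨hps, hqs, hpq⟩
    rw [tildeT_eq, Finset.mem_union] at hp hq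
    rcases hp with hp | hp <;> rcases hq with hq | hq
    · -- p ∈ w, q ∈ w'
      have hne : p ≠ q := fun h => Finset.disjoint_left.mp hfar.1 hp (h ▸ hq)
      exact hfar.2 ⟨p, hp, q, hq, hne, hwv hp, hw'v hq, Or.inl hadj2⟩
    · -- p ∈ w, q ∈ m'' linked to w'
      obtain ⟨m'', hm'', hqm''⟩ := Finset.mem_biUnion.mp hq
      rw [Finset.mem_filter] at hm''
      have : Linked H2 m'' w := ⟨(maxt_disjoint_star hm''.1).mono_right hwv,
        q, hqm'', p, hp, H2.symm _ _ hadj2⟩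
      exact not_linked_both hS hs hfar hwv hw'v hm''.1 this hm''.2
    · -- p ∈ m' linked to w, q ∈ w'
      obtain ⟨m', hm', hpm'⟩ := Finset.mem_biUnion.mp hp
      rw [Finset.mem_filter] at hm'
      have : Linked H2 m' w' := ⟨(maxt_disjoint_star hm'.1).mono_right hw'v,
        p, hpm', q, hq, hadj2⟩
      exact not_linked_both hS hs hfar hwv hw'v hm'.1 hm'.2 this
    · -- p ∈ m', q ∈ m''
      obtain ⟨m', hm', hpm'⟩ := Finset.mem_biUnion.mp hp
      obtain ⟨m'', hm'', hqm''⟩ := Finset.mem_biUnion.mp hq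
      rw [Finset.mem_filter] at hm' hm''
      have hne : m' ≠ m'' := by
        intro h
        exact not_linked_both hS hs hfar hwv hw'v hm'.1 hm'.2 (h ▸ hm''.2)
      exact (maxt_farApart hU2 hm'.1 hm''.1 hne).2 ⟨p, hpm', q, hqm'', hadj2⟩

lemma mem_gammaSub_cases {W : Finset (Finset ℕ)} {y : Finset ℕ}
    (hy : y ∈ gammaSub H S s W) :
    y ∈ S ∨ ∃ w ∈ W, y = tildeT (induce H s) (restrictT S s) w := by
  rw [gammaSub, substT, Finset.mem_union, Finset.mem_union] at hy
  rcases hy with hy | hy | hy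
  · exact Or.inl hy
  · exact Or.inl (mem_restrictT.mp hy).1
  · obtain ⟨w, hw, hwy⟩ := Finset.mem_image.mp hy
    exact Or.inr ⟨w, hw, hwy.symm⟩

lemma gammaSub_isTubing (hS : IsTubing H S) (hs : s ∈ S) (hsp : s ≠ H.verts)
    {W : Finset (Finset ℕ)}
    (hW : IsTubing (gammaStar (induce H s) (restrictT S s)) W) :
    IsTubing H (gammaSub H S s W) := by
  refine ⟨?_, ?_, ?_⟩
  · exact Finset.mem_union_left _ hS.1
  · intro y hy
    rcases mem_gammaSub_cases hy with hy | ⟨w, hw, rfl⟩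
    · exact hS.2.1 y hy
    · exact tildeS_isTube hS hs (hW.2.1 w hw)
  · intro y hy y' hy' hne
    rcases mem_gammaSub_cases hy with hy | ⟨w, hw, rfl⟩ <;>
      rcases mem_gammaSub_cases hy' with hy' | ⟨w', hw', h'⟩
    · exact hS.2.2 y hy y' hy' hne
    · exact h' ▸ compat_S_tilde hS hs hy (hW.2.1 w' hw')
    · exact compatible_symm (compat_S_tilde hS hs hy' (hW.2.1 w hw))
    · subst h'
      have hwne : w ≠ w' := fun h => hne (h ▸ rfl)
      exact compat_tilde_tilde hS hs (hW.2.1 w hw) (hW.2.1 w' hw')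
        (hW.2.2 w hw w' hw' hwne)

end LemA

section MainEq

variable {G : FinGraph} {T : Finset (Finset ℕ)} {t : Finset ℕ}
  {S : Finset (Finset ℕ)} {s : Finset ℕ}

lemma linked_induce_iff {a b m w : Finset ℕ} (hma : m ⊆ a) (hmb : m ⊆ b)
    (hwa : w ⊆ a) (hwb : w ⊆ b) : Linked (induce G a) m w ↔ Linked (induce G b) m w := by
  constructor <;> rintro ⟨hd, v, hv, u, hu, hadj⟩
  · exact ⟨hd, v, hv, u, hu, hmb hv, hwb hu, hadj.2.2⟩
  · exact ⟨hd, v, hv, u, hu, hma hv, hwa hu, hadj.2.2⟩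

/-- Characterization of the tubes of `γ_t(T;S)` contained in `s̃`. -/
lemma mem_restrict_gammaSub (hT : IsTubing G T) (ht : t ∈ T)
    (hS : IsTubing (gammaStar (induce G t) (restrictT T t)) S) (hs : s ∈ S)
    {r : Finset ℕ} :
    r ∈ restrictT (gammaSub G T t S) (tildeT (induce G t) (restrictT T t) s) ↔
      (r ∈ restrictT T t ∧ r ⊆ tildeT (induce G t) (restrictT T t) s) ∨
      (∃ x ∈ S, x ⊆ s ∧ r = tildeT (induce G t) (restrictT T t) x) := by
  set H := induce G t with hH
  set U := restrictT T t with hUdef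
  have hU : IsTubing H U := tubing_restrict hT ht
  have hsv : s ⊆ (gammaStar H U).verts := (hS.2.1 s hs).2.1
  have hstt : tildeT H U s ⊆ t := tilde_subset_verts hU hsv
  constructor
  · intro hr
    obtain ⟨hr1, hr2⟩ := mem_restrictT.mp hr
    rcases mem_gammaSub_cases hr1 with hrT | ⟨x, hx, rfl⟩
    · exact Or.inl ⟨mem_restrictT.mpr ⟨hrT, hr2.trans hstt⟩, hr2⟩
    · refine Or.inr ⟨x, hx, ?_, rfl⟩
      intro a ha
      have hav : a ∈ (gammaStar H U).verts := (hS.2.1 x hx).2.1 ha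
      exact mem_of_mem_tilde_star (hr2 (subset_tilde x ha)) hav
  · rintro (⟨hr1, hr2⟩ | ⟨x, hx, hxs, rfl⟩)
    · refine mem_restrictT.mpr ⟨?_, hr2⟩
      exact Finset.mem_union_right _ (Finset.mem_union_left _ hr1)
    · refine mem_restrictT.mpr ⟨?_, tilde_mono hsv hxs⟩
      exact Finset.mem_union_right _ (Finset.mem_union_right _
        (Finset.mem_image_of_mem _ hx))

lemma stilde_ne (hT : IsTubing G T) (ht : t ∈ T)
    (hS : IsTubing (gammaStar (induce G t) (restrictT T t)) S) (hs : s ∈ S)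
    (hsp : s ≠ (gammaStar (induce G t) (restrictT T t)).verts) :
    tildeT (induce G t) (restrictT T t) s ≠ t := by
  set H := induce G t with hH
  set U := restrictT T t with hUdef
  have hU : IsTubing H U := tubing_restrict hT ht
  have hsv : s ⊆ (gammaStar H U).verts := (hS.2.1 s hs).2.1
  obtain ⟨x, hx, hxs⟩ := Finset.exists_of_ssubset (lt_of_le_of_ne hsv hsp)
  intro h
  have hxt : x ∈ t := star_verts_subset hx
  have : x ∈ tildeT H U s := h ▸ hxt
  exact hxs (mem_of_mem_tilde_star this hx)

/-- KEY: the maximal proper tubes of the restriction of `γ_t(T;S)` to `s̃`. -/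
lemma key_maxt (hT : IsTubing G T) (ht : t ∈ T)
    (hS : IsTubing (gammaStar (induce G t) (restrictT T t)) S) (hs : s ∈ S)
    (hsp : s ≠ (gammaStar (induce G t) (restrictT T t)).verts) :
    MaxtP (induce G (tildeT (induce G t) (restrictT T t) s))
        (restrictT (gammaSub G T t S) (tildeT (induce G t) (restrictT T t) s)) =
      (MaxtP (induce (gammaStar (induce G t) (restrictT T t)) s) (restrictT S s)).image
          (tildeT (induce G t) (restrictT T t)) ∪
        ((MaxtP (induce G t) (restrictT T t)).filter
            (fun m => Linked (induce G t) m s)).filter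
          (fun m => ∀ m' ∈ MaxtP (induce (gammaStar (induce G t) (restrictT T t)) s)
            (restrictT S s), ¬ Linked (induce G t) m m') := by
  classical
  set H := induce G t with hH
  set U := restrictT T t with hUdef
  have hU : IsTubing H U := tubing_restrict hT ht
  set GS := gammaStar H U with hGS
  set H2 := induce GS s with hH2
  set U2 := restrictT S s with hU2def
  have hU2 : IsTubing H2 U2 := tubing_restrict hS hs
  set st := tildeT H U s with hstdef
  have hsv : s ⊆ GS.verts := (hS.2.1 s hs).2.1
  have hsne : s.Nonempty := (hS.2.1 s hs).1
  have hstt : st ⊆ t := tilde_subset_verts hU hsv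
  have hstne : st ≠ t := stilde_ne hT ht hS hs hsp
  have hsst : s ⊆ st := subset_tilde s
  -- s̃-membership facts for maximal tubes of S|s
  have hm'sub : ∀ m' ∈ MaxtP H2 U2, m' ⊆ s := fun m' hm' => (maxt_isTube hU2 hm').2.1
  have hm'v : ∀ m' ∈ MaxtP H2 U2, m' ⊆ GS.verts := fun m' hm' => (hm'sub m' hm').trans hsv
  have hm'ne : ∀ m' ∈ MaxtP H2 U2, m' ≠ s := fun m' hm' => (mem_maxtP.mp hm').1.2
  -- restriction of γ_t(T;S) to s̃, proper part
  have hprop : ∀ r, r ∈ properTubes (induce G st) (restrictT (gammaSub G T t S) st) ↔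
      (((r ∈ U ∧ r ⊆ st) ∨ (∃ x ∈ S, x ⊆ s ∧ r = tildeT H U x)) ∧ r ≠ st) := by
    intro r
    rw [mem_properTubes]
    constructor
    · rintro ⟨h1, h2⟩
      rcases (mem_restrict_gammaSub hT ht hS hs).mp h1 with h | h
      · exact ⟨Or.inl ⟨mem_restrictT.mp h.1 |>.1 |> (fun hh => mem_restrictT.mpr
          ⟨hh, (mem_restrictT.mp h.1).2⟩), h.2⟩, h2⟩
      · exact ⟨Or.inr h, h2⟩
    · rintro ⟨h1, h2⟩
      refine ⟨(mem_restrict_gammaSub hT ht hS hs).mpr ?_, h2⟩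
      rcases h1 with h | h
      · exact Or.inl ⟨h.1, h.2⟩
      · exact Or.inr h
  -- U-tubes inside s̃ are proper tubes of U
  have hUproper : ∀ r, r ∈ U → r ⊆ st → r ∈ properTubes H U := by
    intro r hr hrst
    refine mem_properTubes.mpr ⟨hr, ?_⟩
    intro h
    subst h
    exact hstne (Finset.Subset.antisymm hstt hrst)
  -- every U-tube inside s̃ sits inside a maximal tube linked to s
  have hF6 : ∀ r, r ∈ U → r ⊆ st → ∃ m ∈ MaxtP H U, Linked H m s ∧ r ⊆ m :=
    fun r hr hrst => subset_linked_maxt hU (hUproper r hr hrst) hsv hrst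
  -- tl1 m' is a proper tube of the restriction
  have hc1 : ∀ m' ∈ MaxtP H2 U2,
      tildeT H U m' ∈ properTubes (induce G st) (restrictT (gammaSub G T t S) st) := by
    intro m' hm'
    refine (hprop _).mpr ⟨Or.inr ⟨m', mem_restrictT.mp (maxtP_subset hm') |>.1,
      hm'sub m' hm', rfl⟩, ?_⟩
    intro h
    exact hm'ne m' hm' (tilde_inj (hm'v m' hm') hsv h)
  -- linked maximal tubes are proper tubes of the restriction
  have hc2 : ∀ m ∈ MaxtP H U, Linked H m s →
      m ∈ properTubes (induce G st) (restrictT (gammaSub G T t S) st) := by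
    intro m hm hlk
    have hmst : m ⊆ st := linked_subset_tilde hm hlk
    refine (hprop _).mpr ⟨Or.inl ⟨maxtP_subset hm, hmst⟩, ?_⟩
    intro h
    obtain ⟨a, ha⟩ := hsne
    exact Finset.disjoint_left.mp ((maxt_disjoint_star hm).mono_right hsv)
      (h ▸ hsst ha) ha
  apply Finset.ext
  intro r
  constructor
  · -- a maximal proper tube is of one of the two forms
    intro hr
    obtain ⟨⟨hr1, hr2⟩, hrmax⟩ := mem_maxtP.mp hr
    have hr1' := (hprop r).mp (mem_properTubes.mpr ⟨hr1, hr2⟩)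
    rcases hr1'.1 with ⟨hrU, hrst⟩ | ⟨x, hx, hxs, rfl⟩
    · -- r is a tube of U inside s̃ : r is a linked maximal tube with no link to M'
      obtain ⟨m0, hm0, hm0lk, hrm0⟩ := hF6 r hrU hrst
      have hm0p := hc2 m0 hm0 hm0lk
      have hrm0' : r = m0 := hrmax m0 hm0p hrm0
      subst hrm0'
      refine Finset.mem_union_right _ (Finset.mem_filter.mpr
        ⟨Finset.mem_filter.mpr ⟨hm0, hm0lk⟩, ?_⟩)
      intro m' hm' hlk'
      have hsub : r ⊆ tildeT H U m' := linked_subset_tilde hm0 hlk'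
      have heq : r = tildeT H U m' := hrmax _ (hc1 m' hm') hsub
      obtain ⟨a, ha⟩ := (maxt_isTube hU2 hm').1
      have : a ∈ r := heq ▸ subset_tilde m' ha
      exact Finset.disjoint_left.mp ((maxt_disjoint_star hm0).mono_right (hm'v m' hm'))
        this ha
    · -- r = tl1 x : x is a maximal proper tube of S|s
      have hxp : x ∈ properTubes H2 U2 := by
        refine mem_properTubes.mpr ⟨mem_restrictT.mpr ⟨hx, hxs⟩, ?_⟩
        intro h
        exact hr1'.2 (by rw [h]; rfl)
      obtain ⟨m', hm', hxm'⟩ := exists_maxt hxp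
      have hsub : tildeT H U x ⊆ tildeT H U m' := tilde_mono (hm'v m' hm') hxm'
      have heq := hrmax _ (hc1 m' hm') hsub
      rw [heq]
      exact Finset.mem_union_left _ (Finset.mem_image_of_mem _ hm')
  · -- both forms are maximal proper tubes
    intro hr
    rcases Finset.mem_union.mp hr with hr | hr
    · obtain ⟨m', hm', rfl⟩ := Finset.mem_image.mp hr
      refine mem_maxtP.mpr ⟨mem_properTubes.mp (hc1 m' hm'), ?_⟩
      intro r' hr' hsub
      rcases ((hprop r').mp hr').1 with ⟨hrU, hrst⟩ | ⟨x, hx, hxs, rfl⟩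
      · -- impossible: tl1 m' inside a U-tube
        obtain ⟨m0, hm0, _, hrm0⟩ := hF6 r' hrU hrst
        obtain ⟨a, ha⟩ := (maxt_isTube hU2 hm').1
        exact absurd ((hm'v m' hm') ha) (Finset.disjoint_left.mp
          (maxt_disjoint_star hm0) (hrm0 (hsub (subset_tilde m' ha))))
      · -- tl1 m' ⊆ tl1 x forces m' = x by maximality of m'
        have hm'x : m' ⊆ x := by
          intro a ha
          exact mem_of_mem_tilde_star (hsub (subset_tilde m' ha)) ((hm'v m' hm') ha)
        have hxp : x ∈ properTubes H2 U2 := by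
          refine mem_properTubes.mpr ⟨mem_restrictT.mpr ⟨hx, hxs⟩, ?_⟩
          intro h
          exact ((hprop _).mp hr').2 (by rw [h]; rfl)
        have : m' = x := (mem_maxtP.mp hm').2 x hxp hm'x
        rw [this]
    · obtain ⟨hm, hnolk⟩ := Finset.mem_filter.mp hr
      obtain ⟨hmM, hmlk⟩ := Finset.mem_filter.mp hm
      refine mem_maxtP.mpr ⟨mem_properTubes.mp (hc2 r hmM hmlk), ?_⟩
      intro r' hr' hsub
      have hrne : r.Nonempty := (maxt_isTube hU hmM).1
      rcases ((hprop r').mp hr').1 with ⟨hrU, hrst⟩ | ⟨x, hx, hxs, rfl⟩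
      · obtain ⟨m0, hm0, _, hrm0⟩ := hF6 r' hrU hrst
        have : r = m0 := by
          by_contra hne
          obtain ⟨a, ha⟩ := hrne
          exact Finset.disjoint_left.mp (maxt_pairwise_disjoint hU hmM hm0 hne)
            ha (hrm0 (hsub ha))
        exact Finset.Subset.antisymm hsub (this ▸ hrm0)
      · -- r ⊆ tl1 x gives a link from r to a maximal tube of S|s : contradiction
        have hxv : x ⊆ GS.verts := (hS.2.1 x hx).2.1
        have hlkx : Linked H r x := linked_of_subset_tilde hU hmM hxv hsub
        have hxp : x ∈ properTubes H2 U2 := by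
          refine mem_properTubes.mpr ⟨mem_restrictT.mpr ⟨hx, hxs⟩, ?_⟩
          intro h
          exact ((hprop _).mp hr').2 (by rw [h]; rfl)
        obtain ⟨m', hm', hxm'⟩ := exists_maxt hxp
        have hd : Disjoint r m' := (maxt_disjoint_star hmM).mono_right (hm'v m' hm')
        exact absurd (linked_mono hlkx hxm' hd) (hnolk m' hm')

/-- Transfer of linkedness between `(Γ_t)_{T|_t}^*`-level and `Γ`-level for the tubes
`tilde m'`. -/
lemma linked_transfer1 (hT : IsTubing G T) (ht : t ∈ T)
    (hS : IsTubing (gammaStar (induce G t) (restrictT T t)) S) (hs : s ∈ S)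
    {w : Finset ℕ}
    (hw : w ⊆ (gammaStar (induce (gammaStar (induce G t) (restrictT T t)) s)
      (restrictT S s)).verts)
    {m' : Finset ℕ}
    (hm' : m' ∈ MaxtP (induce (gammaStar (induce G t) (restrictT T t)) s)
      (restrictT S s)) :
    Linked (induce G (tildeT (induce G t) (restrictT T t) s))
        (tildeT (induce G t) (restrictT T t) m') w ↔
      Linked (induce (gammaStar (induce G t) (restrictT T t)) s) m' w := by
  set H := induce G t with hH
  set U := restrictT T t with hUdef
  have hU : IsTubing H U := tubing_restrict hT ht
  set GS := gammaStar H U with hGS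
  set H2 := induce GS s with hH2
  set U2 := restrictT S s with hU2def
  have hU2 : IsTubing H2 U2 := tubing_restrict hS hs
  set st := tildeT H U s with hstdef
  have hsv : s ⊆ GS.verts := (hS.2.1 s hs).2.1
  have hsst : s ⊆ st := subset_tilde s
  have hstt : st ⊆ t := tilde_subset_verts hU hsv
  have hm'sub : m' ⊆ s := (maxt_isTube hU2 hm').2.1
  have hm'v : m' ⊆ GS.verts := hm'sub.trans hsv
  have hws : w ⊆ s := hw.trans star_verts_subset
  have hwGS : w ⊆ GS.verts := hws.trans hsv
  have hwst : w ⊆ st := hws.trans hsst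
  have hdm'w : Disjoint m' w := (maxt_disjoint_star hm').mono_right hw
  have hdtw : Disjoint (tildeT H U m') w := by
    rw [tildeT_eq, Finset.disjoint_union_left]
    refine ⟨hdm'w, (Finset.disjoint_biUnion_left _ _ _).mpr ?_⟩
    intro f hf
    exact (maxt_disjoint_star (Finset.mem_filter.mp hf).1).mono_right hwGS
  have htm'st : tildeT H U m' ⊆ st := tilde_mono hsv hm'sub
  constructor
  · rintro ⟨_, v, hv, u, hu, hadj⟩
    obtain ⟨hvst, hust, hG⟩ := hadj
    rw [tildeT_eq, Finset.mem_union] at hv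
    rcases hv with hv | hv
    · refine ⟨hdm'w, v, hv, u, hu, hm'sub hv, hws hu, ?_⟩
      refine ⟨?_, hm'v hv, hwGS hu, Or.inl ⟨hstt hvst, hstt hust, hG⟩⟩
      intro h
      exact Finset.disjoint_left.mp hdm'w hv (h ▸ hu)
    · obtain ⟨f, hffil, hvf⟩ := Finset.mem_biUnion.mp hv
      obtain ⟨hfM, hflk⟩ := Finset.mem_filter.mp hffil
      obtain ⟨_, a, haf, b, hbm', hab⟩ := hflk
      have hGadj : GS.Adj u b := by
        refine ⟨?_, hwGS hu, hm'v hbm', Or.inr ⟨f, hfM, ⟨v, hvf, ?_⟩, ⟨a, haf, H.symm _ _ hab⟩⟩⟩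
        · intro h
          exact Finset.disjoint_left.mp hdm'w hbm' (h ▸ hu)
        · exact ⟨hstt hust, hstt hvst, G.symm _ _ hG⟩
      exact ⟨hdm'w, b, hbm', u, hu, hm'sub hbm', hws hu, GS.symm _ _ hGadj⟩
  · rintro ⟨_, v, hv, u, hu, hadj⟩
    obtain ⟨hvs, hus, hGSadj⟩ := hadj
    obtain ⟨hne, hvGS, huGS, hor⟩ := hGSadj
    rcases hor with hHadj | ⟨f, hfM, ⟨p, hp, hvp⟩, ⟨q, hq, huq⟩⟩
    · exact ⟨hdtw, v, subset_tilde m' hv, u, hu,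
        htm'st (subset_tilde m' hv), hwst hu, hHadj.2.2⟩
    · have hflk : Linked H f m' :=
        ⟨(maxt_disjoint_star hfM).mono_right hm'v, p, hp, v, hv, H.symm _ _ hvp⟩
      have hfsub : f ⊆ tildeT H U m' := linked_subset_tilde hfM hflk
      exact ⟨hdtw, q, hfsub hq, u, hu, htm'st (hfsub hq), hwst hu,
        (H.symm _ _ huq).2.2⟩

/-- The composite tube `tilde (tilde w)` agrees with the tube `tilde'' w` computed in
`γ_t(T;S)` restricted to `s̃`. -/
lemma tilde_comp (hT : IsTubing G T) (ht : t ∈ T)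
    (hS : IsTubing (gammaStar (induce G t) (restrictT T t)) S) (hs : s ∈ S)
    (hsp : s ≠ (gammaStar (induce G t) (restrictT T t)).verts)
    {w : Finset ℕ}
    (hwt : IsTube (gammaStar (induce (gammaStar (induce G t) (restrictT T t)) s)
      (restrictT S s)) w) :
    tildeT (induce G t) (restrictT T t)
        (tildeT (induce (gammaStar (induce G t) (restrictT T t)) s) (restrictT S s) w) =
      tildeT (induce G (tildeT (induce G t) (restrictT T t) s))
        (restrictT (gammaSub G T t S) (tildeT (induce G t) (restrictT T t) s)) w := by
  set H := induce G t with hH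
  set U := restrictT T t with hUdef
  have hU : IsTubing H U := tubing_restrict hT ht
  set GS := gammaStar H U with hGS
  set H2 := induce GS s with hH2
  set U2 := restrictT S s with hU2def
  have hU2 : IsTubing H2 U2 := tubing_restrict hS hs
  set st := tildeT H U s with hstdef
  have hsv : s ⊆ GS.verts := (hS.2.1 s hs).2.1
  have hsst : s ⊆ st := subset_tilde s
  have hstt : st ⊆ t := tilde_subset_verts hU hsv
  have hw : w ⊆ (gammaStar H2 U2).verts := hwt.2.1
  have hws : w ⊆ s := hw.trans star_verts_subset
  have hwGS : w ⊆ GS.verts := hws.trans hsv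
  have hwst : w ⊆ st := hws.trans hsst
  have hwt' : w ⊆ t := hwst.trans hstt
  have hkey := key_maxt hT ht hS hs hsp
  set tw := tildeT H2 U2 w with htwdef
  have htw_s : tw ⊆ s := tilde_subset_verts hU2 hw
  have htw_GS : tw ⊆ GS.verts := htw_s.trans hsv
  have hm'subf : ∀ m' ∈ MaxtP H2 U2, m' ⊆ s := fun m' hm' => (maxt_isTube hU2 hm').2.1
  have hm'vf : ∀ m' ∈ MaxtP H2 U2, m' ⊆ GS.verts := fun m' hm' => (hm'subf m' hm').trans hsv
  -- a maximal tube `tilde m'` that is H2-linked to w sits inside the RHS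
  have hA : ∀ m' ∈ MaxtP H2 U2, Linked H2 m' w →
      tildeT H U m' ⊆ tildeT (induce G st) (restrictT (gammaSub G T t S) st) w := by
    intro m' hm' hlk2
    have hmem : tildeT H U m' ∈ MaxtP (induce G st) (restrictT (gammaSub G T t S) st) := by
      rw [hkey]
      exact Finset.mem_union_left _ (Finset.mem_image_of_mem _ hm')
    exact linked_subset_tilde hmem ((linked_transfer1 hT ht hS hs hw hm').mpr hlk2)
  -- the both-linked helper
  have he : ∀ m ∈ MaxtP H U, ∀ m' ∈ MaxtP H2 U2, Linked H m w → Linked H m m' →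
      Linked H2 m' w := by
    intro m hmM m' hm' h1 h2
    obtain ⟨_, v', hv'm, u', hu'w, hA1⟩ := h1
    obtain ⟨_, a, ham, b, hbm', hA2⟩ := h2
    have hd2 : Disjoint m' w := (maxt_disjoint_star hm').mono_right hw
    have hGSadj : GS.Adj u' b := by
      refine ⟨?_, hwGS hu'w, hm'vf m' hm' hbm',
        Or.inr ⟨m, hmM, ⟨v', hv'm, H.symm _ _ hA1⟩, ⟨a, ham, H.symm _ _ hA2⟩⟩⟩
      intro h
      exact Finset.disjoint_left.mp hd2 hbm' (h ▸ hu'w)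
    exact ⟨hd2, b, hbm', u', hu'w, hm'subf m' hm' hbm', hws hu'w, GS.symm _ _ hGSadj⟩
  apply Finset.Subset.antisymm
  · -- tilde (tilde w) ⊆ tilde'' w
    rw [tildeT_eq (x := tw)]
    refine Finset.union_subset ?_ ?_
    · -- tw ⊆ RHS
      rw [htwdef, tildeT_eq (x := w)]
      refine Finset.union_subset (subset_tilde w) ?_
      refine Finset.biUnion_subset.mpr ?_
      intro m' hm'f
      obtain ⟨hm', hlk2⟩ := Finset.mem_filter.mp hm'f
      exact (subset_tilde m').trans (hA m' hm' hlk2)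
    · refine Finset.biUnion_subset.mpr ?_
      intro m hmf
      obtain ⟨hmM, hlk⟩ := Finset.mem_filter.mp hmf
      obtain ⟨_, v, hvm, u, hutw, hadj⟩ := hlk
      rw [htwdef, tildeT_eq (x := w), Finset.mem_union] at hutw
      rcases hutw with huw | humem
      · -- m is linked to w itself
        have hlkw : Linked H m w := ⟨(maxt_disjoint_star hmM).mono_right hwGS,
          v, hvm, u, huw, hadj⟩
        by_cases hex : ∃ m' ∈ MaxtP H2 U2, Linked H m m'
        · obtain ⟨m', hm', hlkm⟩ := hex
          exact (linked_subset_tilde hmM hlkm).trans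
            (hA m' hm' (he m hmM m' hm' hlkw hlkm))
        · push_neg at hex
          have hmlks : Linked H m s := linked_mono hlkw hws
            ((maxt_disjoint_star hmM).mono_right hsv)
          have hmst : m ⊆ st := linked_subset_tilde hmM hmlks
          have hmt : m ⊆ t := (maxt_isTube hU hmM).2.1
          have hmem : m ∈ MaxtP (induce G st) (restrictT (gammaSub G T t S) st) := by
            rw [hkey]
            exact Finset.mem_union_right _ (Finset.mem_filter.mpr
              ⟨Finset.mem_filter.mpr ⟨hmM, hmlks⟩, hex⟩)
          exact linked_subset_tilde hmem
            ((linked_induce_iff hmst hmt hwst hwt').mpr hlkw)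
      · -- m is linked to a maximal tube m'₂ that is linked to w
        obtain ⟨m'2, hm'2f, hum'2⟩ := Finset.mem_biUnion.mp humem
        obtain ⟨hm'2, hlk2⟩ := Finset.mem_filter.mp hm'2f
        have hlkm : Linked H m m'2 := ⟨(maxt_disjoint_star hmM).mono_right
          (hm'vf m'2 hm'2), v, hvm, u, hum'2, hadj⟩
        exact (linked_subset_tilde hmM hlkm).trans (hA m'2 hm'2 hlk2)
  · -- tilde'' w ⊆ tilde (tilde w)
    rw [tildeT_eq (x := w)]
    refine Finset.union_subset
      (Finset.Subset.trans (subset_tilde w) (subset_tilde tw)) ?_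
    · refine Finset.biUnion_subset.mpr ?_
      intro m'' hm''f
      obtain ⟨hm''M, hlk''⟩ := Finset.mem_filter.mp hm''f
      rw [hkey, Finset.mem_union] at hm''M
      rcases hm''M with hm''M | hm''M
      · obtain ⟨m', hm', rfl⟩ := Finset.mem_image.mp hm''M
        have hlk2 : Linked H2 m' w := (linked_transfer1 hT ht hS hs hw hm').mp hlk''
        have hm'tw : m' ⊆ tw := linked_subset_tilde hm' hlk2
        exact tilde_mono htw_GS hm'tw
      · obtain ⟨hmf, hnolk⟩ := Finset.mem_filter.mp hm''M
        obtain ⟨hmM, hmlks⟩ := Finset.mem_filter.mp hmf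
        have hmst : m'' ⊆ st := linked_subset_tilde hmM hmlks
        have hmt : m'' ⊆ t := (maxt_isTube hU hmM).2.1
        have hlkw : Linked H m'' w := (linked_induce_iff hmst hmt hwst hwt').mp hlk''
        have hlktw : Linked H m'' tw := linked_mono hlkw (subset_tilde w)
          ((maxt_disjoint_star hmM).mono_right htw_GS)
        exact linked_subset_tilde hmM hlktw

end MainEq

end CDTub

open CDTub in
/-- Associativity of substitution: for a tubing `W` of `(((Γ_t)_{T|_t}^*)_s)_{S|_s}^*`,
the family `γ_s(S;W)` is a tubing of `(Γ_t)_{T|_t}^*` and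
`γ_t(T;γ_s(S;W)) = γ_{s̃}(γ_t(T;S);W)`. -/
theorem subst_assoc (G : FinGraph) (hc : IsConnGraph G)
    (T : Finset (Finset ℕ)) (hT : IsTubing G T) (t : Finset ℕ) (ht : t ∈ T)
    (S : Finset (Finset ℕ))
    (hS : IsTubing (gammaStar (induce G t) (restrictT T t)) S)
    (s : Finset ℕ) (hs : s ∈ S)
    (hsp : s ≠ (gammaStar (induce G t) (restrictT T t)).verts)
    (W : Finset (Finset ℕ))
    (hW : IsTubing (gammaStar (induce (gammaStar (induce G t) (restrictT T t)) s)
      (restrictT S s)) W) :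
    IsTubing (gammaStar (induce G t) (restrictT T t))
      (gammaSub (gammaStar (induce G t) (restrictT T t)) S s W) ∧
    gammaSub G T t (gammaSub (gammaStar (induce G t) (restrictT T t)) S s W) =
      gammaSub G (gammaSub G T t S) (tildeT (induce G t) (restrictT T t) s) W := by
  constructor
  · exact gammaSub_isTubing hS hs hsp hW
  · apply Finset.ext
    intro r
    constructor
    · intro hr
      rcases mem_gammaSub_cases hr with hrT | ⟨a, ha, rfl⟩
      · exact Finset.mem_union_left _ (Finset.mem_union_left _ hrT)
      · rcases mem_gammaSub_cases ha with haS | ⟨w, hw, rfl⟩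
        · exact Finset.mem_union_left _ (Finset.mem_union_right _
            (Finset.mem_union_right _ (Finset.mem_image_of_mem _ haS)))
        · rw [tilde_comp hT ht hS hs hsp (hW.2.1 w hw)]
          exact Finset.mem_union_right _ (Finset.mem_union_right _
            (Finset.mem_image_of_mem _ hw))
    · intro hr
      rcases Finset.mem_union.mp hr with hr | hr
      · rcases mem_gammaSub_cases hr with hrT | ⟨x, hx, rfl⟩
        · exact Finset.mem_union_left _ hrT
        · exact Finset.mem_union_right _ (Finset.mem_union_right _
            (Finset.mem_image_of_mem _ (Finset.mem_union_left _ hx)))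
      · rcases Finset.mem_union.mp hr with hr | hr
        · rcases (mem_restrict_gammaSub hT ht hS hs).mp hr with ⟨hrU, _⟩ | ⟨x, hx, _, rfl⟩
          · exact Finset.mem_union_right _ (Finset.mem_union_left _ hrU)
          · exact Finset.mem_union_right _ (Finset.mem_union_right _
              (Finset.mem_image_of_mem _ (Finset.mem_union_left _ hx)))
        · obtain ⟨w, hw, rfl⟩ := Finset.mem_image.mp hr
          rw [← tilde_comp hT ht hS hs hsp (hW.2.1 w hw)]
          refine Finset.mem_union_right _ (Finset.mem_union_right _
            (Finset.mem_image_of_mem _ ?_))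
          exact Finset.mem_union_right _ (Finset.mem_union_right _
            (Finset.mem_image_of_mem _ hw))
end
end

section
/- For any finite connected simple graph Γ, every tubing T of Γ may be obtained from the universal tubing T_Γ = {t_Γ} by iterated substitutions that add one tube at a time: there exist k ≥ 0 and a sequence of tubings T_0 = {t_Γ}, T_1, …, T_k = T of Γ such that for each 1 ≤ i ≤ k, T_i = γ_{t_Γ}(T_{i−1}; S_i) = T_{i−1} •_Γ S_i, where S_i is a tubing of the iterated reconnected complement Γ_{T_{i−1}}^* having exactly one proper tube. -/
open scoped Classical
open TensorProduct

noncomputable section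

namespace CDTub

/-! ### Auxiliary lemmas for the main theorem -/

/-- A pairwise far apart family. -/
def PFA (G : FinGraph) (F : Finset (Finset ℕ)) : Prop :=
  ∀ f ∈ F, ∀ f' ∈ F, f ≠ f' → FarApart G f f'

/-- Along any walk inside `t` from a vertex of `f` to a vertex outside `f`, there is an
edge from `f` to a vertex of `t` outside the whole family `F`. -/
lemma exitEdge {G : FinGraph} {F : Finset (Finset ℕ)} (hF : PFA G F)
    {t : Finset ℕ} {x y : ℕ}
    (hw : Relation.ReflTransGen (fun a b => a ∈ t ∧ b ∈ t ∧ G.Adj a b) x y)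
    {f : Finset ℕ} (hf : f ∈ F) (hx : x ∈ f) (hy : y ∉ f) :
    ∃ a ∈ f, ∃ b ∈ t, b ∉ F.biUnion id ∧ G.Adj a b := by
  revert hx
  induction hw using Relation.ReflTransGen.head_induction_on with
  | refl => intro h; exact absurd h hy
  | @head a c hstep _ ih =>
    intro ha
    obtain ⟨hat, hct, hadj⟩ := hstep
    by_cases hcf : c ∈ f
    · exact ih hcf
    · by_cases hcF : c ∈ F.biUnion id
      · obtain ⟨f', hf', hcf'⟩ := Finset.mem_biUnion.mp hcF
        have hne : f ≠ f' := fun h => hcf (h ▸ hcf')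
        exact absurd ⟨a, ha, c, hcf', hadj⟩ (hF f hf f' hf' hne).2
      · exact ⟨a, ha, c, hct, hcF, hadj⟩

/-- Walks in `t` between vertices outside the family `F` project to walks in the
reconnected complement staying inside `t \ ⋃ F`. -/
lemma reconnWalk {G : FinGraph} {F : Finset (Finset ℕ)} (hF : PFA G F)
    {t : Finset ℕ} (ht : t ⊆ G.verts) {v w : ℕ}
    (hw : Relation.ReflTransGen (fun a b => a ∈ t ∧ b ∈ t ∧ G.Adj a b) v w)
    (hvF : v ∉ F.biUnion id) (hwF : w ∉ F.biUnion id) :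
    Relation.ReflTransGen (fun a b => a ∈ t \ F.biUnion id ∧ b ∈ t \ F.biUnion id ∧
      (reconnAll G F).Adj a b) v w := by
  set R' : ℕ → ℕ → Prop := fun a b => a ∈ t \ F.biUnion id ∧ b ∈ t \ F.biUnion id ∧
      (reconnAll G F).Adj a b with hR'
  have hmemV : ∀ a ∈ t, a ∉ F.biUnion id → a ∈ G.verts \ F.biUnion id := by
    intro a h1 h2; exact Finset.mem_sdiff.mpr ⟨ht h1, h2⟩
  have hmemT : ∀ a ∈ t, a ∉ F.biUnion id → a ∈ t \ F.biUnion id := by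
    intro a h1 h2; exact Finset.mem_sdiff.mpr ⟨h1, h2⟩
  have main : (v ∉ F.biUnion id → Relation.ReflTransGen R' v w) ∧
      (∀ f ∈ F, v ∈ f → ∀ b, b ∈ t → b ∉ F.biUnion id → (∃ u ∈ f, G.Adj b u) →
        Relation.ReflTransGen R' b w) := by
    clear hvF
    induction hw using Relation.ReflTransGen.head_induction_on with
    | refl =>
      constructor
      · intro _; exact Relation.ReflTransGen.refl
      · intro f hfF hwf
        exact absurd (Finset.mem_biUnion.mpr ⟨f, hfF, hwf⟩) hwF
    | @head a c hstep _ ih =>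
      obtain ⟨hat, hct, hadj⟩ := hstep
      constructor
      · intro haF
        by_cases hcF : c ∈ F.biUnion id
        · obtain ⟨f, hfF, hcf⟩ := Finset.mem_biUnion.mp hcF
          exact ih.2 f hfF hcf a hat haF ⟨c, hcf, hadj⟩
        · have hne : a ≠ c := fun h => G.loopless a (h ▸ hadj)
          have hstep' : R' a c := ⟨hmemT a hat haF, hmemT c hct hcF,
            hne, hmemV a hat haF, hmemV c hct hcF, Or.inl hadj⟩
          exact Relation.ReflTransGen.head hstep' (ih.1 hcF)
      · intro f hfF haf b hbt hbF hbu
        by_cases hcF : c ∈ F.biUnion id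
        · obtain ⟨f', hf'F, hcf'⟩ := Finset.mem_biUnion.mp hcF
          by_cases hff' : f = f'
          · exact ih.2 f hfF (hff' ▸ hcf') b hbt hbF hbu
          · exact absurd ⟨a, haf, c, hcf', hadj⟩ (hF f hfF f' hf'F hff').2
        · by_cases hbc : b = c
          · subst hbc; exact ih.1 hcF
          · have hstep' : R' b c := ⟨hmemT b hbt hbF, hmemT c hct hcF,
              hbc, hmemV b hbt hbF, hmemV c hct hcF,
              Or.inr ⟨f, hfF, hbu, ⟨a, haf, G.symm a c hadj⟩⟩⟩
            exact Relation.ReflTransGen.head hstep' (ih.1 hcF)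
  exact main.1 hvF

/-- If every member of a pairwise far apart family `F` is a proper subset of a connected
set `t` or disjoint from it, then `t` is not covered by `F`. -/
lemma sdiff_nonempty_of_pfa {G : FinGraph} {F : Finset (Finset ℕ)} (hF : PFA G F)
    {t : Finset ℕ} (htne : t.Nonempty) (htc : VConn G t)
    (hFt : ∀ f ∈ F, f ⊆ t ∨ Disjoint f t) (hfne : ∀ f ∈ F, f ≠ t) :
    (t \ F.biUnion id).Nonempty := by
  obtain ⟨x, hx⟩ := htne
  by_cases hxF : x ∈ F.biUnion id
  · obtain ⟨f, hfF, hxf⟩ := Finset.mem_biUnion.mp hxF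
    have hft : f ⊆ t := by
      rcases hFt f hfF with h | h
      · exact h
      · exact absurd hx (Finset.disjoint_left.mp h hxf)
    have hssub : f ⊂ t := Finset.ssubset_iff_subset_ne.mpr ⟨hft, hfne f hfF⟩
    obtain ⟨y, hyt, hyf⟩ := Finset.exists_of_ssubset hssub
    obtain ⟨a, _, b, hbt, hbF, _⟩ := exitEdge hF (htc x hx y hyt) hfF hxf hyf
    exact ⟨b, Finset.mem_sdiff.mpr ⟨hbt, hbF⟩⟩
  · exact ⟨x, Finset.mem_sdiff.mpr ⟨hx, hxF⟩⟩

lemma mem_MaxtP {G : FinGraph} {T : Finset (Finset ℕ)} {m : Finset ℕ} :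
    m ∈ MaxtP G T ↔ (m ∈ T ∧ m ≠ G.verts) ∧
      ∀ s' ∈ T, s' ≠ G.verts → m ⊆ s' → m = s' := by
  unfold MaxtP properTubes
  simp only [Finset.mem_filter]
  constructor
  · rintro ⟨⟨h1, h2⟩, h3⟩
    exact ⟨⟨h1, h2⟩, fun s' hs' hs'ne hsub => h3 s' ⟨hs', hs'ne⟩ hsub⟩
  · rintro ⟨⟨h1, h2⟩, h3⟩
    exact ⟨⟨h1, h2⟩, fun s' hs' hsub => h3 s' hs'.1 hs'.2 hsub⟩

lemma MaxtP_pfa {G : FinGraph} {T : Finset (Finset ℕ)} (hT : IsTubing G T) :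
    PFA G (MaxtP G T) := by
  intro f hf f' hf' hne
  obtain ⟨⟨hfT, hfne⟩, hfmax⟩ := mem_MaxtP.mp hf
  obtain ⟨⟨hf'T, hf'ne⟩, hf'max⟩ := mem_MaxtP.mp hf'
  rcases hT.2.2 f hfT f' hf'T hne with h | h | h
  · exact absurd (hfmax f' hf'T hf'ne h) hne
  · exact absurd (hf'max f hfT hfne h).symm hne
  · exact h

/-- The key single-substitution step: adding one new tube `t`, maximal among the proper
tubes, to a tubing `T'` is a substitution of a one-proper-tube tubing. -/
lemma step_subst {G : FinGraph} (hc : IsConnGraph G) {T' : Finset (Finset ℕ)}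
    (hT' : IsTubing G T') {t : Finset ℕ}
    (htube : IsTube G t) (htne : t ≠ G.verts) (htn : t ∉ T')
    (hcomp : ∀ m ∈ T', Compatible G t m)
    (hmax : ∀ m ∈ T', t ⊆ m → m = G.verts) :
    ∃ S : Finset (Finset ℕ),
      IsTubing (gammaStar G T') S ∧
      (S.filter (fun s => s ≠ (gammaStar G T').verts)).card = 1 ∧
      insert t T' = substT G T' S := by
  classical
  obtain ⟨htnonempty, htsub, htconn⟩ := htube
  obtain ⟨hGne, _, hGconn⟩ := hc
  set F := MaxtP G T' with hFdef
  have hF : PFA G F := MaxtP_pfa hT'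
  set U := F.biUnion id with hUdef
  have hfprops : ∀ f ∈ F, f ∈ T' ∧ f ≠ G.verts ∧ IsTube G f := by
    intro f hf
    obtain ⟨⟨h1, h2⟩, _⟩ := mem_MaxtP.mp hf
    exact ⟨h1, h2, hT'.2.1 f h1⟩
  have hUsub : U ⊆ G.verts := by
    intro x hx
    obtain ⟨f, hfF, hxf⟩ := Finset.mem_biUnion.mp hx
    exact (hfprops f hfF).2.2.2.1 hxf
  have hFt : ∀ f ∈ F, f ⊆ t ∨ FarApart G t f := by
    intro f hfF
    obtain ⟨hfT, hfne, _⟩ := hfprops f hfF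
    rcases hcomp f hfT with h | h | h
    · exact absurd (hmax f hfT h) hfne
    · exact Or.inl h
    · exact Or.inr h
  have hfnet : ∀ f ∈ F, f ≠ t := fun f hfF h => htn (h ▸ (hfprops f hfF).1)
  have hDisjU : ∀ f ∈ F, ∀ (t' : Finset ℕ), Disjoint f (t' \ U) := by
    intro f hfF t'
    refine Finset.disjoint_right.mpr (fun {a} ha haf => ?_)
    exact (Finset.mem_sdiff.mp ha).2 (Finset.mem_biUnion.mpr ⟨f, hfF, haf⟩)
  have hlinkGen : ∀ f ∈ F, ∀ (t' : Finset ℕ), VConn G t' → f ⊆ t' → f ≠ t' →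
      ∃ a ∈ f, ∃ b ∈ t' \ U, G.Adj a b := by
    intro f hfF t' ht'conn hft' hfnet'
    obtain ⟨x, hxf⟩ := (hfprops f hfF).2.2.1
    obtain ⟨y, hyt', hyf⟩ := Finset.exists_of_ssubset
      (Finset.ssubset_iff_subset_ne.mpr ⟨hft', hfnet'⟩)
    obtain ⟨a, haf, b, hbt, hbU, hadj⟩ :=
      exitEdge hF (ht'conn x (hft' hxf) y hyt') hfF hxf hyf
    exact ⟨a, haf, b, Finset.mem_sdiff.mpr ⟨hbt, hbU⟩, hadj⟩
  set gv := G.verts \ U with hgvdef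
  set s := t \ U with hsdef
  have hgvverts : (gammaStar G T').verts = gv := rfl
  have hsne : s.Nonempty := sdiff_nonempty_of_pfa hF htnonempty htconn
    (fun f hfF => (hFt f hfF).imp id (fun h => h.1.symm)) hfnet
  have hgvne : gv.Nonempty := sdiff_nonempty_of_pfa hF hGne hGconn
    (fun f hfF => Or.inl (hfprops f hfF).2.2.2.1) (fun f hfF => (hfprops f hfF).2.1)
  have hsgv : s ⊆ gv := Finset.sdiff_subset_sdiff htsub (Finset.Subset.refl U)
  have hstube : IsTube (gammaStar G T') s := by
    refine ⟨hsne, by rw [hgvverts]; exact hsgv, ?_⟩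
    intro v hv w hw
    obtain ⟨hvt, hvU⟩ := Finset.mem_sdiff.mp hv
    obtain ⟨hwt, hwU⟩ := Finset.mem_sdiff.mp hw
    exact reconnWalk hF htsub (htconn v hvt w hwt) hvU hwU
  have hgvtube : IsTube (gammaStar G T') gv := by
    refine ⟨hgvne, by rw [hgvverts], ?_⟩
    intro v hv w hw
    obtain ⟨hvt, hvU⟩ := Finset.mem_sdiff.mp hv
    obtain ⟨hwt, hwU⟩ := Finset.mem_sdiff.mp hw
    exact reconnWalk hF (Finset.Subset.refl _) (hGconn v hvt w hwt) hvU hwU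
  have hsnegv : s ≠ gv := by
    intro hEq
    by_cases hall : ∀ f ∈ F, f ⊆ t
    · apply htne
      apply Finset.Subset.antisymm htsub
      intro x hxv
      by_cases hxU : x ∈ U
      · obtain ⟨f, hfF, hxf⟩ := Finset.mem_biUnion.mp hxU
        exact hall f hfF hxf
      · have hxgv : x ∈ gv := Finset.mem_sdiff.mpr ⟨hxv, hxU⟩
        rw [← hEq] at hxgv
        exact (Finset.mem_sdiff.mp hxgv).1
    · push_neg at hall
      obtain ⟨f, hfF, hft⟩ := hall
      have hfa : FarApart G t f := (hFt f hfF).resolve_left hft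
      obtain ⟨x, hxf⟩ := (hfprops f hfF).2.2.1
      obtain ⟨y, hyt⟩ := htnonempty
      have hyf' : y ∉ f := fun h => Finset.disjoint_right.mp hfa.1 h hyt
      obtain ⟨a, haf, b, hbv, hbU, hadj⟩ := exitEdge hF
        (hGconn x ((hfprops f hfF).2.2.2.1 hxf) y (htsub hyt)) hfF hxf hyf'
      have hbgv : b ∈ gv := Finset.mem_sdiff.mpr ⟨hbv, hbU⟩
      rw [← hEq] at hbgv
      exact hfa.2 ⟨b, (Finset.mem_sdiff.mp hbgv).1, a, haf, G.symm a b hadj⟩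
  have hlinkgv : ∀ f ∈ F, Linked G f gv := by
    intro f hfF
    obtain ⟨a, haf, b, hb, hadj⟩ := hlinkGen f hfF G.verts hGconn
      (hfprops f hfF).2.2.2.1 (hfprops f hfF).2.1
    exact ⟨hDisjU f hfF G.verts, a, haf, b, hb, hadj⟩
  have htgv : tildeT G T' gv = G.verts := by
    unfold tildeT
    rw [← hFdef]
    have hfil : F.filter (fun m => Linked G m gv) = F :=
      Finset.filter_true_of_mem (fun f hf => hlinkgv f hf)
    rw [hfil, ← hUdef]
    rw [hgvdef]
    exact Finset.sdiff_union_of_subset hUsub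
  have hts : tildeT G T' s = t := by
    unfold tildeT
    rw [← hFdef]
    have hfil : F.filter (fun m => Linked G m s) = F.filter (fun m => m ⊆ t) := by
      apply Finset.filter_congr
      intro f hfF
      constructor
      · intro hl
        rcases hFt f hfF with h | h
        · exact h
        · obtain ⟨_, v, hvf, w, hws, hadj⟩ := hl
          exact absurd ⟨w, (Finset.mem_sdiff.mp hws).1, v, hvf, G.symm v w hadj⟩ h.2
      · intro hft
        exact ⟨hDisjU f hfF t, hlinkGen f hfF t htconn hft (hfnet f hfF)⟩
    rw [hfil]
    apply Finset.Subset.antisymm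
    · intro x hx
      rcases Finset.mem_union.mp hx with h | h
      · exact (Finset.mem_sdiff.mp h).1
      · obtain ⟨f, hf, hxf⟩ := Finset.mem_biUnion.mp h
        exact (Finset.mem_filter.mp hf).2 hxf
    · intro x hxt
      by_cases hxU : x ∈ U
      · obtain ⟨f, hfF, hxf⟩ := Finset.mem_biUnion.mp hxU
        have hft : f ⊆ t := by
          rcases hFt f hfF with h | h
          · exact h
          · exact absurd hxt (Finset.disjoint_right.mp h.1 hxf)
        exact Finset.mem_union_right _
          (Finset.mem_biUnion.mpr ⟨f, Finset.mem_filter.mpr ⟨hfF, hft⟩, hxf⟩)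
      · exact Finset.mem_union_left _ (Finset.mem_sdiff.mpr ⟨hxt, hxU⟩)
  refine ⟨{s, gv}, ?_, ?_, ?_⟩
  · refine ⟨?_, ?_, ?_⟩
    · rw [hgvverts]
      exact Finset.mem_insert_of_mem (Finset.mem_singleton_self gv)
    · intro u hu
      rcases Finset.mem_insert.mp hu with h | h
      · exact h ▸ hstube
      · exact (Finset.mem_singleton.mp h) ▸ hgvtube
    · intro u hu u' hu' hne
      rcases Finset.mem_insert.mp hu with h | h <;>
        rcases Finset.mem_insert.mp hu' with h' | h'
      · exact absurd (h.trans h'.symm) hne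
      · exact h ▸ (Finset.mem_singleton.mp h') ▸ Or.inl hsgv
      · exact (Finset.mem_singleton.mp h) ▸ h' ▸ Or.inr (Or.inl hsgv)
      · exact absurd ((Finset.mem_singleton.mp h).trans
          (Finset.mem_singleton.mp h').symm) hne
  · have hfil : (({s, gv} : Finset (Finset ℕ)).filter
        (fun u => u ≠ (gammaStar G T').verts)) = {s} := by
      ext u
      simp only [Finset.mem_filter, Finset.mem_insert, Finset.mem_singleton, hgvverts]
      constructor
      · rintro ⟨h | h, hne⟩
        · exact h
        · exact absurd h hne
      · rintro rfl
        exact ⟨Or.inl rfl, hsnegv⟩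
    rw [hfil, Finset.card_singleton]
  · unfold substT
    have himg : ({s, gv} : Finset (Finset ℕ)).image (tildeT G T') = {t, G.verts} := by
      rw [Finset.image_insert, Finset.image_singleton, hts, htgv]
    rw [himg]
    ext u
    simp only [Finset.mem_insert, Finset.mem_union, Finset.mem_singleton]
    constructor
    · rintro (rfl | h)
      · exact Or.inr (Or.inl rfl)
      · exact Or.inl h
    · rintro (h | rfl | rfl)
      · exact Or.inr h
      · exact Or.inl rfl
      · exact Or.inr hT'.1

end CDTub

open CDTub in
/-- Every tubing of a connected graph is obtained from the universal tubing `{t_Γ}` by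
iterated substitutions, each adding a single tube. -/
theorem tubing_generated_by_single_substitutions (G : FinGraph) (hc : IsConnGraph G)
    (T : Finset (Finset ℕ)) (hT : IsTubing G T) :
    ∃ (k : ℕ) (f : ℕ → Finset (Finset ℕ)),
      f 0 = {G.verts} ∧ f k = T ∧ (∀ i ≤ k, IsTubing G (f i)) ∧
      ∀ i < k, ∃ S : Finset (Finset ℕ),
        IsTubing (gammaStar G (f i)) S ∧
        (S.filter (fun s => s ≠ (gammaStar G (f i)).verts)).card = 1 ∧
        f (i + 1) = substT G (f i) S := by
  classical
  suffices H : ∀ n (T : Finset (Finset ℕ)), T.card = n → IsTubing G T →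
      (∃ (k : ℕ) (f : ℕ → Finset (Finset ℕ)),
        f 0 = {G.verts} ∧ f k = T ∧ (∀ i ≤ k, IsTubing G (f i)) ∧
        ∀ i < k, ∃ S : Finset (Finset ℕ),
          IsTubing (gammaStar G (f i)) S ∧
          (S.filter (fun s => s ≠ (gammaStar G (f i)).verts)).card = 1 ∧
          f (i + 1) = substT G (f i) S) by
    exact H T.card T rfl hT
  intro n
  induction n using Nat.strong_induction_on with
  | _ n ih =>
    intro T hcard hT
    by_cases hsing : ∀ u ∈ T, u = G.verts
    · have hTeq : T = {G.verts} := Finset.eq_singleton_iff_unique_mem.mpr ⟨hT.1, hsing⟩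
      refine ⟨0, fun _ => {G.verts}, rfl, hTeq.symm, ?_, ?_⟩
      · intro i _
        refine ⟨Finset.mem_singleton_self _, ?_, ?_⟩
        · intro u hu
          rw [Finset.mem_singleton.mp hu]
          exact hc
        · intro u hu u' hu' hne
          exact absurd ((Finset.mem_singleton.mp hu).trans
            (Finset.mem_singleton.mp hu').symm) hne
      · intro i hi
        exact absurd hi (Nat.not_lt_zero i)
    · push_neg at hsing
      obtain ⟨t₀, ht₀T, ht₀ne⟩ := hsing
      have hPne : (T.filter (fun u => u ≠ G.verts)).Nonempty :=
        ⟨t₀, Finset.mem_filter.mpr ⟨ht₀T, ht₀ne⟩⟩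
      obtain ⟨t, htP, htmax⟩ :=
        Finset.exists_max_image (T.filter (fun u => u ≠ G.verts)) Finset.card hPne
      obtain ⟨htT, htne⟩ := Finset.mem_filter.mp htP
      have hvT1 : G.verts ∈ T.erase t := Finset.mem_erase.mpr ⟨Ne.symm htne, hT.1⟩
      have hT1sub : T.erase t ⊆ T := Finset.erase_subset t T
      have hT1tubing : IsTubing G (T.erase t) :=
        ⟨hvT1, fun u hu => hT.2.1 u (hT1sub hu),
         fun u hu u' hu' hne => hT.2.2 u (hT1sub hu) u' (hT1sub hu') hne⟩
      have hT1card : (T.erase t).card < n := hcard ▸ Finset.card_erase_lt_of_mem htT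
      obtain ⟨k', f', hf0, hfk, hftub, hfstep⟩ :=
        ih (T.erase t).card hT1card (T.erase t) rfl hT1tubing
      have hmax : ∀ m ∈ T.erase t, t ⊆ m → m = G.verts := by
        intro m hm hsub
        by_contra hmne
        have hmP : m ∈ T.filter (fun u => u ≠ G.verts) :=
          Finset.mem_filter.mpr ⟨hT1sub hm, hmne⟩
        have heq : t = m := Finset.eq_of_subset_of_card_le hsub (htmax m hmP)
        exact (Finset.mem_erase.mp hm).1 heq.symm
      have hcomp : ∀ m ∈ T.erase t, Compatible G t m := by
        intro m hm
        exact hT.2.2 t htT m (hT1sub hm) (fun h => (Finset.mem_erase.mp hm).1 h.symm)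
      obtain ⟨S, hStub, hScard, hSeq⟩ := step_subst hc hT1tubing (hT.2.1 t htT) htne
        (Finset.notMem_erase t T) hcomp hmax
      refine ⟨k' + 1, fun i => if i ≤ k' then f' i else T, ?_, ?_, ?_, ?_⟩
      · show (if 0 ≤ k' then f' 0 else T) = {G.verts}
        rw [if_pos (Nat.zero_le k')]
        exact hf0
      · show (if k' + 1 ≤ k' then f' (k' + 1) else T) = T
        rw [if_neg (by omega)]
      · intro i hi
        show IsTubing G (if i ≤ k' then f' i else T)
        by_cases h : i ≤ k'
        · rw [if_pos h]; exact hftub i h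
        · rw [if_neg h]; exact hT
      · intro i hi
        by_cases h : i + 1 ≤ k'
        · have hii : i ≤ k' := by omega
          obtain ⟨S', h1, h2, h3⟩ := hfstep i (by omega)
          refine ⟨S', ?_, ?_, ?_⟩
          · show IsTubing (gammaStar G (if i ≤ k' then f' i else T)) S'
            rw [if_pos hii]; exact h1
          · show (S'.filter (fun s =>
              s ≠ (gammaStar G (if i ≤ k' then f' i else T)).verts)).card = 1
            rw [if_pos hii]; exact h2
          · show (if i + 1 ≤ k' then f' (i + 1) else T) =
              substT G (if i ≤ k' then f' i else T) S'
            rw [if_pos h, if_pos hii]; exact h3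
        · have hik : i = k' := by omega
          have hii : i ≤ k' := le_of_eq hik
          have hfi : (if i ≤ k' then f' i else T) = T.erase t := by
            rw [if_pos hii, hik]; exact hfk
          refine ⟨S, ?_, ?_, ?_⟩
          · show IsTubing (gammaStar G (if i ≤ k' then f' i else T)) S
            rw [hfi]; exact hStub
          · show (S.filter (fun s =>
              s ≠ (gammaStar G (if i ≤ k' then f' i else T)).verts)).card = 1
            rw [hfi]; exact hScard
          · show (if i + 1 ≤ k' then f' (i + 1) else T) =
              substT G (if i ≤ k' then f' i else T) S
            rw [if_neg (by omega), hfi, ← hSeq, Finset.insert_erase htT]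
end
end
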